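/- arXiv:1609.07775 — 13 statements merged into one kernel-verified Lean document; each statement's English description precedes it below -/
import Mathlib

section
/- Let n ≥ 1 and let (U_a)_{a∈[n²]} and (V_b)_{b∈[n²]} be unitary error bases on ℂ^n. Define, for a, b ∈ [n²], the vector Q_{a,b} ∈ ℂ^n ⊗ ℂ^n whose coordinate at (c,d) ∈ [n]×[n] is Q_{a,b,(c,d)} = (1/√n) · ∑_{k∈[n]} U_{a,c,k} · V_{b,k,d} (i.e., Q_{a,b} is the vectorization of the matrix (1/√n)·U_a·V_b). Then Q is a quantum Latin square of dimension n². -/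
open scoped ComplexConjugate Matrix

noncomputable section

/-- A (possibly rectangularly-indexed) complex Hadamard matrix: all entries have
modulus 1, and distinct rows are orthogonal, with `∑ k, H i k * conj (H j k) = n·δ_{i,j}`
where `n` is the dimension (the common cardinality of the row and column index sets). -/
def IsHadamard {R C : Type*} [Fintype R] [Fintype C] [DecidableEq R]
    (H : Matrix R C ℂ) : Prop :=
  Fintype.card R = Fintype.card C ∧
  (∀ i j, ‖H i j‖ = 1) ∧
  (∀ i j, ∑ k, H i k * conj (H j k) = if i = j then (Fintype.card R : ℂ) else 0)

/-- A quantum Latin square of dimension `n`: an `n × n` grid (rows and columns indexed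
by `A`, with `|A| = n`) of vectors in `ℂ^n` (coordinates indexed by `X`, `|X| = n`),
such that every row and every column is an orthonormal basis. -/
def IsQLS {A X : Type*} [Fintype A] [Fintype X] [DecidableEq A]
    (Q : A → A → X → ℂ) : Prop :=
  Fintype.card X = Fintype.card A ∧
  (∀ a b c, ∑ i, conj (Q a b i) * Q a c i = if b = c then 1 else 0) ∧
  (∀ a b c, ∑ i, conj (Q a c i) * Q b c i = if a = b then 1 else 0)

/-- A unitary error basis of dimension `n`: a family of `n²` unitary matrices
(rows indexed by `R`, columns by `C`, both of cardinality `n`; elements indexed by `A`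
with `|A| = n²`) that are orthogonal with respect to the trace inner product:
`Tr(U_a† U_b) = n·δ_{a,b}`. -/
def IsUEB {A R C : Type*} [Fintype A] [Fintype R] [Fintype C]
    [DecidableEq A] [DecidableEq R] [DecidableEq C]
    (U : A → Matrix R C ℂ) : Prop :=
  Fintype.card A = (Fintype.card R) ^ 2 ∧
  (∀ a, U a * (U a)ᴴ = 1 ∧ (U a)ᴴ * U a = 1) ∧
  (∀ a b, Matrix.trace ((U a)ᴴ * U b) = if a = b then (Fintype.card R : ℂ) else 0)

lemma sum_conj_mul_eq_trace {n : ℕ} (M N : Matrix (Fin n) (Fin n) ℂ) :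
    ∑ i : Fin n × Fin n, conj (M i.1 i.2) * N i.1 i.2 = Matrix.trace (Mᴴ * N) := by
  rw [Matrix.trace, Fintype.sum_prod_type]
  simp only [Matrix.diag_apply, Matrix.mul_apply, Matrix.conjTranspose_apply]
  rw [Finset.sum_comm]
  rfl

/-- two unitary error bases on ℂ^n produce a quantum Latin square of
dimension n², via `Q_{a,b,(c,d)} = (1/√n) · ∑_k U_{a,c,k} · V_{b,k,d}`. -/
theorem ueb_ueb_to_qls (n : ℕ) (hn : 1 ≤ n)
    (U V : Fin (n ^ 2) → Matrix (Fin n) (Fin n) ℂ)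
    (hU : IsUEB U) (hV : IsUEB V) :
    IsQLS (fun (a b : Fin (n ^ 2)) (cd : Fin n × Fin n) =>
      ((Real.sqrt n : ℂ))⁻¹ * ∑ k : Fin n, U a cd.1 k * V b k cd.2) := by
  obtain ⟨hUcard, hUun, hUtr⟩ := hU
  obtain ⟨hVcard, hVun, hVtr⟩ := hV
  have hn0 : (0:ℝ) < n := by exact_mod_cast hn
  have hsq : ((Real.sqrt n : ℂ))⁻¹ * conj ((Real.sqrt n : ℂ))⁻¹ * (n : ℂ) = 1 := by
    rw [map_inv₀, Complex.conj_ofReal, ← mul_inv, ← Complex.ofReal_mul,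
      Real.mul_self_sqrt hn0.le]
    norm_cast
    rw [inv_mul_cancel₀]
    exact_mod_cast hn0.ne'
  have key : ∀ (a b a' b' : Fin (n^2)),
      (∑ i : Fin n × Fin n,
        conj (((Real.sqrt n : ℂ))⁻¹ * ∑ k : Fin n, U a i.1 k * V b k i.2) *
          (((Real.sqrt n : ℂ))⁻¹ * ∑ k : Fin n, U a' i.1 k * V b' k i.2)) =
      ((Real.sqrt n : ℂ))⁻¹ * conj ((Real.sqrt n : ℂ))⁻¹ *
        Matrix.trace ((U a * V b)ᴴ * (U a' * V b')) := by
    intro a b a' b'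
    rw [← sum_conj_mul_eq_trace, Finset.mul_sum]
    refine Finset.sum_congr rfl fun i _ => ?_
    simp only [Matrix.mul_apply, map_mul]
    ring
  refine ⟨by simp [Fintype.card_prod, sq], ?_, ?_⟩
  · intro a b c
    rw [key a b a c]
    have h : Matrix.trace ((U a * V b)ᴴ * (U a * V c)) =
        if b = c then (n : ℂ) else 0 := by
      rw [Matrix.conjTranspose_mul, Matrix.mul_assoc, ← Matrix.mul_assoc ((U a)ᴴ),
        (hUun a).2, Matrix.one_mul]
      simpa using hVtr b c
    rw [h]
    split_ifs
    · exact hsq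
    · simp
  · intro a b c
    rw [key a c b c]
    have h : Matrix.trace ((U a * V c)ᴴ * (U b * V c)) =
        if a = b then (n : ℂ) else 0 := by
      rw [Matrix.conjTranspose_mul, Matrix.trace_mul_cycle,
        Matrix.mul_assoc (U b), (hVun c).1, Matrix.mul_one, Matrix.trace_mul_comm]
      simpa using hUtr a b
    rw [h]
    split_ifs
    · exact hsq
    · simp
end
end

section
/- (Hosoya–Suzuki generalized tensor product.) Let n, m ≥ 1, let (J^b)_{b∈[m]} be an m-controlled family of Hadamard matrices of dimension n, and let (K^c)_{c∈[n]} be an n-controlled family of Hadamard matrices of dimension m. Then the matrix H indexed by [n]×[m] on both rows and columns, with entries H_{(a,b),(c,d)} = J^b_{a,c} · K^c_{b,d} for a, c ∈ [n] and b, d ∈ [m], is a Hadamard matrix of dimension nm. -/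
open scoped ComplexConjugate Matrix

noncomputable section

/-- Hosoya–Suzuki generalized tensor product: an m-controlled family of
n-dimensional Hadamard matrices and an n-controlled family of m-dimensional Hadamard
matrices combine, via `H_{(a,b),(c,d)} = J^b_{a,c} · K^c_{b,d}`, into an
nm-dimensional Hadamard matrix. -/
theorem hosoya_suzuki (n m : ℕ) (hn : 1 ≤ n) (hm : 1 ≤ m)
    (J : Fin m → Matrix (Fin n) (Fin n) ℂ)
    (K : Fin n → Matrix (Fin m) (Fin m) ℂ)
    (hJ : ∀ b, IsHadamard (J b)) (hK : ∀ c, IsHadamard (K c)) :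
    IsHadamard (Matrix.of fun (p q : Fin n × Fin m) =>
      J p.2 p.1 q.1 * K q.1 p.2 q.2) := by
  refine ⟨by simp, fun p q => ?_, fun p q => ?_⟩
  · simp only [Matrix.of_apply, norm_mul]
    rw [(hJ p.2).2.1 p.1 q.1, (hK q.1).2.1 p.2 q.2, one_mul]
  · obtain ⟨a, b⟩ := p; obtain ⟨a', b'⟩ := q
    rw [Fintype.sum_prod_type]
    simp only [Matrix.of_apply, map_mul]
    have : ∀ c : Fin n, ∑ d : Fin m, (J b a c * K c b d) * (conj (J b' a' c) * conj (K c b' d))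
        = J b a c * conj (J b' a' c) * (if b = b' then (Fintype.card (Fin m) : ℂ) else 0) := by
      intro c
      rw [← (hK c).2.2 b b', Finset.mul_sum]
      congr 1; ext d; ring
    simp only [this]
    by_cases hb : b = b'
    · subst hb
      simp only [if_true, ← Finset.sum_mul, (hJ b).2.2 a a']
      by_cases ha : a = a' <;>
        simp [ha, Fintype.card_prod, Prod.ext_iff] <;> push_cast <;> ring
    · simp [hb, Prod.ext_iff]
end
end

section
/- Let n, m ≥ 1, let (V^b)_{b∈[m²]} be an m²-controlled family of unitary error bases on ℂ^n, and let (W_b)_{b∈[m²]} be a unitary error basis on ℂ^m. For a ∈ [n²] and b ∈ [m²], define U_{(a,b)} := W_b ⊗ V^b_a, the Kronecker product acting on ℂ^m ⊗ ℂ^n, i.e., the matrix with entries (U_{(a,b)})_{(c,d),(f,e)} = W_{b,c,f} · V^b_{a,d,e} for c, f ∈ [m] and d, e ∈ [n]. Then (U_{(a,b)})_{(a,b)∈[n²]×[m²]} is a unitary error basis on ℂ^m ⊗ ℂ^n (i.e., of dimension nm). -/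
open scoped ComplexConjugate Matrix

noncomputable section

/-- an m²-controlled family of UEBs on ℂ^n together with a UEB on ℂ^m
produce, via the Kronecker product `U_{(a,b)} = W_b ⊗ V^b_a` (acting on ℂ^m ⊗ ℂ^n,
with entries `(U_{(a,b)})_{(c,d),(f,e)} = W_{b,c,f} · V^b_{a,d,e}`), a UEB of
dimension nm. -/
theorem ueb_controlled_tensor (n m : ℕ) (hn : 1 ≤ n) (hm : 1 ≤ m)
    (V : Fin (m ^ 2) → Fin (n ^ 2) → Matrix (Fin n) (Fin n) ℂ)
    (W : Fin (m ^ 2) → Matrix (Fin m) (Fin m) ℂ)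
    (hV : ∀ b, IsUEB (V b)) (hW : IsUEB W) :
    IsUEB (fun ab : Fin (n ^ 2) × Fin (m ^ 2) =>
      Matrix.of fun (cd fe : Fin m × Fin n) =>
        W ab.2 cd.1 fe.1 * V ab.2 ab.1 cd.2 fe.2) := by
  obtain ⟨hWcard, hWunit, hWtr⟩ := hW
  refine ⟨?_, ?_, ?_⟩
  · simp [Fintype.card_prod]
    ring
  · rintro ⟨a, b⟩
    obtain ⟨_, hVunit, _⟩ := hV b
    have hw1 : ∀ c c', ∑ f, W b c f * star (W b c' f) = if c = c' then 1 else 0 := by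
      intro c c'
      have := congrFun (congrFun (hWunit b).1 c) c'
      simpa [Matrix.mul_apply, Matrix.conjTranspose_apply, Matrix.one_apply] using this
    have hw2 : ∀ c c', ∑ f, star (W b f c) * W b f c' = if c = c' then 1 else 0 := by
      intro c c'
      have := congrFun (congrFun (hWunit b).2 c) c'
      simpa [Matrix.mul_apply, Matrix.conjTranspose_apply, Matrix.one_apply] using this
    have hv1 : ∀ d d', ∑ e, V b a d e * star (V b a d' e) = if d = d' then 1 else 0 := by
      intro d d'
      have := congrFun (congrFun (hVunit a).1 d) d'
      simpa [Matrix.mul_apply, Matrix.conjTranspose_apply, Matrix.one_apply] using this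
    have hv2 : ∀ d d', ∑ e, star (V b a e d) * V b a e d' = if d = d' then 1 else 0 := by
      intro d d'
      have := congrFun (congrFun (hVunit a).2 d) d'
      simpa [Matrix.mul_apply, Matrix.conjTranspose_apply, Matrix.one_apply] using this
    constructor
    · ext ⟨c, d⟩ ⟨c', d'⟩
      simp only [Matrix.mul_apply, Matrix.conjTranspose_apply, Matrix.of_apply,
        Fintype.sum_prod_type, Matrix.one_apply, star_mul']
      calc ∑ f, ∑ e, W b c f * V b a d e * (star (W b c' f) * star (V b a d' e))
          = (∑ f, W b c f * star (W b c' f)) * (∑ e, V b a d e * star (V b a d' e)) := by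
            rw [Finset.sum_mul_sum]
            exact Finset.sum_congr rfl fun f _ => Finset.sum_congr rfl fun e _ => by ring
        _ = (if c = c' then 1 else 0) * (if d = d' then 1 else 0) := by rw [hw1, hv1]
        _ = _ := by
            by_cases h1 : c = c' <;> by_cases h2 : d = d' <;>
              simp [h1, h2, Prod.ext_iff]
    · ext ⟨c, d⟩ ⟨c', d'⟩
      simp only [Matrix.mul_apply, Matrix.conjTranspose_apply, Matrix.of_apply,
        Fintype.sum_prod_type, Matrix.one_apply, star_mul']
      calc ∑ f, ∑ e, star (W b f c) * star (V b a e d) * (W b f c' * V b a e d')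
          = (∑ f, star (W b f c) * W b f c') * (∑ e, star (V b a e d) * V b a e d') := by
            rw [Finset.sum_mul_sum]
            exact Finset.sum_congr rfl fun f _ => Finset.sum_congr rfl fun e _ => by ring
        _ = (if c = c' then 1 else 0) * (if d = d' then 1 else 0) := by rw [hw2, hv2]
        _ = _ := by
            by_cases h1 : c = c' <;> by_cases h2 : d = d' <;>
              simp [h1, h2, Prod.ext_iff]
  · rintro ⟨a, b⟩ ⟨a', b'⟩
    have hwt : ∑ c, ∑ f, star (W b f c) * W b' f c = if b = b' then (m : ℂ) else 0 := by
      have := hWtr b b'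
      simpa [Matrix.trace, Matrix.mul_apply, Matrix.conjTranspose_apply, Matrix.diag]
        using this
    simp only [Matrix.trace, Matrix.mul_apply, Matrix.conjTranspose_apply, Matrix.of_apply,
      Matrix.diag, Fintype.sum_prod_type, star_mul', Fintype.card_prod, Fintype.card_fin]
    calc ∑ c, ∑ d, ∑ f, ∑ e, star (W b f c) * star (V b a e d) * (W b' f c * V b' a' e d)
        = (∑ c, ∑ f, star (W b f c) * W b' f c) *
            (∑ d, ∑ e, star (V b a e d) * V b' a' e d) := by
          rw [Finset.sum_mul_sum]
          refine Finset.sum_congr rfl fun c _ => Finset.sum_congr rfl fun d _ => ?_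
          rw [Finset.sum_mul_sum]
          exact Finset.sum_congr rfl fun f _ => Finset.sum_congr rfl fun e _ => by ring
      _ = _ := by
          rcases eq_or_ne b b' with rfl | hbb
          · rw [hwt]
            obtain ⟨_, _, hVtr⟩ := hV b
            have hvt : ∑ d, ∑ e, star (V b a e d) * V b a' e d
                = if a = a' then (n : ℂ) else 0 := by
              have := hVtr a a'
              simpa [Matrix.trace, Matrix.mul_apply, Matrix.conjTranspose_apply,
                Matrix.diag] using this
            rw [if_pos rfl, hvt]
            rcases eq_or_ne a a' with rfl | haa
            · simp [mul_comm]
            · simp [haa, Prod.ext_iff]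
          · rw [hwt, if_neg hbb]
            simp [Prod.ext_iff, hbb]
end
end

section
/- (Quantum shift-and-multiply.) Let n ≥ 1, let (H^b)_{b∈[n]} be an n-controlled family of Hadamard matrices of dimension n, and let Q be a quantum Latin square of dimension n. For a, b ∈ [n], define the n×n matrix U_{(a,b)} with entries (U_{(a,b)})_{c,d} = H^b_{a,d} · Q_{b,d,c} for c, d ∈ [n]. Then (U_{(a,b)})_{(a,b)∈[n]×[n]} is a unitary error basis on ℂ^n. -/
open scoped ComplexConjugate Matrix

noncomputable section

lemma conj_mul_self_of_abs_one {z : ℂ} (h : ‖z‖ = 1) : conj z * z = 1 := by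
  have h2 : z * conj z = (Complex.normSq z : ℂ) := Complex.mul_conj z
  have h3 : Complex.normSq z = 1 := by
    have := Complex.sq_norm z
    rw [h] at this; simpa using this.symm
  rw [mul_comm, h2, h3]; norm_num

/-- quantum shift-and-multiply: an n-controlled family of n-dimensional
Hadamard matrices and an n-dimensional quantum Latin square produce a UEB on ℂ^n with
entries `(U_{(a,b)})_{c,d} = H^b_{a,d} · Q_{b,d,c}`. -/
theorem quantum_shift_and_multiply (n : ℕ) (hn : 1 ≤ n)
    (H : Fin n → Matrix (Fin n) (Fin n) ℂ)
    (Q : Fin n → Fin n → Fin n → ℂ)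
    (hH : ∀ b, IsHadamard (H b)) (hQ : IsQLS Q) :
    IsUEB (fun ab : Fin n × Fin n =>
      Matrix.of fun c d : Fin n => H ab.2 ab.1 d * Q ab.2 d c) := by
  obtain ⟨hcard, hrow, hcol⟩ := hQ
  have key : ∀ a b : Fin n,
      (Matrix.of fun c d : Fin n => H b a d * Q b d c)ᴴ *
        (Matrix.of fun c d : Fin n => H b a d * Q b d c) = 1 := by
    intro a b
    ext d d'
    simp only [Matrix.mul_apply, Matrix.conjTranspose_apply, Matrix.of_apply,
      Matrix.one_apply, ← starRingEnd_apply, map_mul]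
    calc ∑ c, conj (H b a d) * conj (Q b d c) * (H b a d' * Q b d' c)
        = conj (H b a d) * H b a d' * ∑ c, conj (Q b d c) * Q b d' c := by
          rw [Finset.mul_sum]; congr 1; ext c; ring
      _ = (if d = d' then 1 else 0 : ℂ) := by
          rw [hrow b d d']
          split_ifs with h
          · subst h
            rw [mul_one]; exact conj_mul_self_of_abs_one ((hH b).2.1 a d)
          · ring
  refine ⟨by simp [Fintype.card_prod, sq], ?_, ?_⟩
  · rintro ⟨a, b⟩
    exact ⟨mul_eq_one_comm.mp (key a b), key a b⟩
  · rintro ⟨a, b⟩ ⟨a', b'⟩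
    simp only [Matrix.trace, Matrix.diag_apply, Matrix.mul_apply,
      Matrix.conjTranspose_apply, Matrix.of_apply, ← starRingEnd_apply, map_mul]
    have step : ∀ d : Fin n,
        ∑ c, conj (H b a d) * conj (Q b d c) * (H b' a' d * Q b' d c)
          = conj (H b a d) * H b' a' d * (if b = b' then 1 else 0 : ℂ) := by
      intro d
      rw [← hcol b b' d, Finset.mul_sum]
      congr 1; ext c; ring
    rw [Finset.sum_congr rfl fun d _ => step d]
    by_cases hb : b = b'
    · subst hb
      simp only [if_true]
      have hHrow := (hH b).2.2 a a'
      have : ∑ d, conj (H b a d) * H b a' d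
          = conj (∑ d, H b a d * conj (H b a' d)) := by
        rw [map_sum]; congr 1; ext d; rw [map_mul, Complex.conj_conj]
      simp only [mul_one]
      rw [this, hHrow]
      by_cases ha : a = a'
      · subst ha; simp [Prod.ext_iff, Fintype.card_fin]
      · simp [Prod.ext_iff, ha]
    · have : (a, b) ≠ (a', b') := by simp [Prod.ext_iff, hb]
      simp [this, hb]
end
end

section
/- (Generalized Hadamard method.) Let n ≥ 1, let (H^b)_{b∈[n]} be an n-controlled family of Hadamard matrices of dimension n, and let F and G be Hadamard matrices of dimension n. For a, b ∈ [n], define the n×n matrix U_{(a,b)} with entries (U_{(a,b)})_{c,d} = (1/√n) · H^b_{a,d} · F_{b,c} · G_{c,d} for c, d ∈ [n]. Then (U_{(a,b)})_{(a,b)∈[n]×[n]} is a unitary error basis on ℂ^n. -/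
open scoped ComplexConjugate Matrix

noncomputable section

/-- generalized Hadamard method: an n-controlled family of n-dimensional
Hadamard matrices and two n-dimensional Hadamard matrices F, G produce a UEB on ℂ^n with
entries `(U_{(a,b)})_{c,d} = (1/√n) · H^b_{a,d} · F_{b,c} · G_{c,d}`. -/
theorem generalized_hadamard_method (n : ℕ) (hn : 1 ≤ n)
    (H : Fin n → Matrix (Fin n) (Fin n) ℂ)
    (F G : Matrix (Fin n) (Fin n) ℂ)
    (hH : ∀ b, IsHadamard (H b)) (hF : IsHadamard F) (hG : IsHadamard G) :
    IsUEB (fun ab : Fin n × Fin n =>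
      Matrix.of fun c d : Fin n =>
        ((Real.sqrt n : ℂ))⁻¹ * H ab.2 ab.1 d * F ab.2 c * G c d) := by
  have hn0 : (n : ℂ) ≠ 0 := Nat.cast_ne_zero.mpr (by omega)
  set s : ℂ := ((Real.sqrt n : ℝ) : ℂ) with hs_def
  have hss : s * s = (n : ℂ) := by
    rw [hs_def, ← Complex.ofReal_mul, Real.mul_self_sqrt (Nat.cast_nonneg n)]
    norm_num
  have hs0 : s ≠ 0 := by
    intro h
    rw [h, zero_mul] at hss
    exact hn0 hss.symm
  have hsc : conj s⁻¹ = s⁻¹ := by rw [map_inv₀, hs_def, Complex.conj_ofReal]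
  have unit : ∀ z : ℂ, ‖z‖ = 1 → z * conj z = 1 := by
    intro z hz
    rw [Complex.mul_conj]
    norm_cast
    rw [← Complex.sq_norm, hz, one_pow]
  have hFrow : ∀ i j, ∑ k, F i k * conj (F j k) = if i = j then (n : ℂ) else 0 := by
    intro i j; simpa using hF.2.2 i j
  have hGrow : ∀ i j, ∑ k, G i k * conj (G j k) = if i = j then (n : ℂ) else 0 := by
    intro i j; simpa using hG.2.2 i j
  have hHrow : ∀ b i j, ∑ k, H b i k * conj (H b j k) = if i = j then (n : ℂ) else 0 := by
    intro b i j; simpa using (hH b).2.2 i j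
  -- column orthogonality for G
  have hG1 : G * Gᴴ = (n : ℂ) • (1 : Matrix (Fin n) (Fin n) ℂ) := by
    ext i j
    simp only [Matrix.mul_apply, Matrix.conjTranspose_apply, Complex.star_def, Matrix.smul_apply,
      Matrix.one_apply, smul_eq_mul]
    rw [hGrow i j]
    split <;> simp
  have hG2 : Gᴴ * G = (n : ℂ) • (1 : Matrix (Fin n) (Fin n) ℂ) := by
    have h1 : G * ((n : ℂ)⁻¹ • Gᴴ) = 1 := by
      rw [Matrix.mul_smul, hG1, smul_smul, inv_mul_cancel₀ hn0, one_smul]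
    have h2 := mul_eq_one_comm.mp h1
    calc Gᴴ * G = (n : ℂ) • (((n : ℂ)⁻¹ • Gᴴ) * G) := by
          rw [Matrix.smul_mul, smul_smul, mul_inv_cancel₀ hn0, one_smul]
      _ = (n : ℂ) • 1 := by rw [h2]
  have hGcol : ∀ i j, ∑ k, conj (G k i) * G k j = if i = j then (n : ℂ) else 0 := by
    intro i j
    have := congrFun (congrFun hG2 i) j
    simp only [Matrix.mul_apply, Matrix.conjTranspose_apply, Complex.star_def, Matrix.smul_apply,
      Matrix.one_apply, smul_eq_mul] at this
    rw [this]
    split <;> simp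
  refine ⟨by simp [Fintype.card_prod, sq], ?_, ?_⟩
  · rintro ⟨a, b⟩
    constructor
    · ext c c'
      simp only [Matrix.mul_apply, Matrix.conjTranspose_apply, Complex.star_def, Matrix.of_apply,
        Matrix.one_apply]
      have key : ∀ d, (s⁻¹ * H b a d * F b c * G c d) *
          conj (s⁻¹ * H b a d * F b c' * G c' d)
          = (s⁻¹ * s⁻¹ * (F b c * conj (F b c'))) * (G c d * conj (G c' d)) := by
        intro d
        have h1 := unit _ ((hH b).2.1 a d)
        simp only [map_mul, hsc]
        linear_combination (s⁻¹ * s⁻¹ * (F b c * conj (F b c')) *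
          (G c d * conj (G c' d))) * h1
      rw [Finset.sum_congr rfl fun d _ => key d, ← Finset.mul_sum, hGrow c c']
      split
      · subst c'
        have h2 := unit _ (hF.2.1 b c)
        rw [h2, mul_one, ← hss]
        field_simp
      · simp
    · ext d d'
      simp only [Matrix.mul_apply, Matrix.conjTranspose_apply, Complex.star_def, Matrix.of_apply,
        Matrix.one_apply]
      have key : ∀ c, conj (s⁻¹ * H b a d * F b c * G c d) *
          (s⁻¹ * H b a d' * F b c * G c d')
          = (s⁻¹ * s⁻¹ * (conj (H b a d) * H b a d')) * (conj (G c d) * G c d') := by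
        intro c
        have h1 := unit _ (hF.2.1 b c)
        simp only [map_mul, hsc]
        linear_combination (s⁻¹ * s⁻¹ * (conj (H b a d) * H b a d') *
          (conj (G c d) * G c d')) * h1
      rw [Finset.sum_congr rfl fun c _ => key c, ← Finset.mul_sum, hGcol d d']
      split
      · subst d'
        have h2 := unit _ ((hH b).2.1 a d)
        rw [mul_comm (conj (H b a d)) (H b a d), h2, mul_one, ← hss]
        field_simp
      · simp
  · rintro ⟨a, b⟩ ⟨a', b'⟩
    simp only [Matrix.trace, Matrix.diag, Matrix.mul_apply, Matrix.conjTranspose_apply, Complex.star_def,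
      Matrix.of_apply]
    have key : ∀ d c, conj (s⁻¹ * H b a d * F b c * G c d) *
        (s⁻¹ * H b' a' d * F b' c * G c d)
        = (s⁻¹ * s⁻¹ * (conj (H b a d) * H b' a' d)) * (F b' c * conj (F b c)) := by
      intro d c
      have h1 := unit _ (hG.2.1 c d)
      simp only [map_mul, hsc]
      linear_combination (s⁻¹ * s⁻¹ * (conj (H b a d) * H b' a' d) *
        (F b' c * conj (F b c))) * h1
    have inner : ∀ d, (∑ c, conj (s⁻¹ * H b a d * F b c * G c d) *
        (s⁻¹ * H b' a' d * F b' c * G c d))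
        = (s⁻¹ * s⁻¹ * (conj (H b a d) * H b' a' d)) * (if b' = b then (n : ℂ) else 0) := by
      intro d
      rw [Finset.sum_congr rfl fun c _ => key d c, ← Finset.mul_sum, hFrow b' b]
    rw [Finset.sum_congr rfl fun d _ => inner d]
    by_cases hb : b' = b
    · subst hb
      simp only [eq_self_iff_true, if_true]
      have : ∀ d, (s⁻¹ * s⁻¹ * (conj (H b' a d) * H b' a' d)) * (n : ℂ)
          = conj (H b' a d) * H b' a' d := by
        intro d
        rw [← hss]
        field_simp
      rw [Finset.sum_congr rfl fun d _ => this d]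
      have hsum : ∑ d, conj (H b' a d) * H b' a' d = if a' = a then (n : ℂ) else 0 := by
        rw [Finset.sum_congr rfl fun d _ => mul_comm (conj (H b' a d)) (H b' a' d)]
        exact hHrow b' a' a
      rw [hsum]
      by_cases ha : a = a'
      · subst ha; simp
      · simp [ha, Prod.ext_iff, Ne.symm ha]
    · simp [hb, Prod.ext_iff, Ne.symm hb]
end
end

section
/- Let n, m ≥ 1. Let (H^{b,c})_{b∈[m²], c∈[n]} be an (m², n)-controlled family of Hadamard matrices of dimension n, let (V^{c,f})_{c,f∈[n]} be an (n, n)-controlled family of unitary error bases on ℂ^m, and let Q be a quantum Latin square of dimension n. For a, c ∈ [n] and b ∈ [m²], define the matrix U_{(a,b,c)} indexed by [n]×[m] on rows and columns with entries (U_{(a,b,c)})_{(d,e),(f,g)} = H^{b,c}_{a,f} · V^{c,f}_{b,e,g} · Q_{c,f,d} for d, f ∈ [n] and e, g ∈ [m]. Then (U_{(a,b,c)})_{(a,b,c)∈[n]×[m²]×[n]} is a unitary error basis of dimension nm. -/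
open scoped ComplexConjugate Matrix

noncomputable section

/-- an (m²,n)-controlled family of n-dimensional Hadamard matrices, an
(n,n)-controlled family of UEBs on ℂ^m, and an n-dimensional quantum Latin square
produce an nm-dimensional UEB with entries
`(U_{(a,b,c)})_{(d,e),(f,g)} = H^{b,c}_{a,f} · V^{c,f}_{b,e,g} · Q_{c,f,d}`. -/
theorem ternary_ueb_a (n m : ℕ) (hn : 1 ≤ n) (hm : 1 ≤ m)
    (H : Fin (m ^ 2) → Fin n → Matrix (Fin n) (Fin n) ℂ)
    (V : Fin n → Fin n → Fin (m ^ 2) → Matrix (Fin m) (Fin m) ℂ)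
    (Q : Fin n → Fin n → Fin n → ℂ)
    (hH : ∀ b c, IsHadamard (H b c))
    (hV : ∀ c f, IsUEB (V c f))
    (hQ : IsQLS Q) :
    IsUEB (fun abc : Fin n × Fin (m ^ 2) × Fin n =>
      Matrix.of fun (de fg : Fin n × Fin m) =>
        H abc.2.1 abc.2.2 abc.1 fg.1 * V abc.2.2 fg.1 abc.2.1 de.2 fg.2 *
          Q abc.2.2 fg.1 de.1) := by
  obtain ⟨hQcard, hQrow, hQcol⟩ := hQ
  -- flipped row-orthonormality of the QLS
  have hQflip : ∀ c d d', ∑ f, Q c f d * conj (Q c f d') = if d = d' then (1:ℂ) else 0 := by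
    intro c d d'
    set M : Matrix (Fin n) (Fin n) ℂ := Matrix.of fun d f => Q c f d with hM
    have h1 : Mᴴ * M = 1 := by
      ext f f'
      simpa [Matrix.mul_apply, Matrix.conjTranspose_apply, hM, Matrix.one_apply] using hQrow c f f'
    have h2 : M * Mᴴ = 1 := mul_eq_one_comm.mp h1
    have h3 := congrFun (congrFun h2 d) d'
    simpa [Matrix.mul_apply, Matrix.conjTranspose_apply, hM, Matrix.one_apply] using h3
  have hVuu : ∀ c f b e e', ∑ g, V c f b e g * conj (V c f b e' g) = if e = e' then (1:ℂ) else 0 := by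
    intro c f b e e'
    have h := congrFun (congrFun ((hV c f).2.1 b).1 e) e'
    simpa [Matrix.mul_apply, Matrix.conjTranspose_apply, Matrix.one_apply] using h
  have hVuu2 : ∀ c f b g g', ∑ e, conj (V c f b e g) * V c f b e g' = if g = g' then (1:ℂ) else 0 := by
    intro c f b g g'
    have h := congrFun (congrFun ((hV c f).2.1 b).2 g) g'
    simpa [Matrix.mul_apply, Matrix.conjTranspose_apply, Matrix.one_apply] using h
  have hVtr : ∀ c f b b', ∑ g, ∑ e, conj (V c f b e g) * V c f b' e g
      = if b = b' then (m:ℂ) else 0 := by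
    intro c f b b'
    have h := (hV c f).2.2 b b'
    simpa [Matrix.trace, Matrix.diag, Matrix.mul_apply, Matrix.conjTranspose_apply] using h
  have hHabs : ∀ b c a f, H b c a f * conj (H b c a f) = 1 := by
    intro b c a f
    rw [Complex.mul_conj, ← Complex.sq_norm, (hH b c).2.1 a f]
    norm_num
  have hHconj : ∀ b c a a', ∑ f, conj (H b c a f) * H b c a' f = if a = a' then (n:ℂ) else 0 := by
    intro b c a a'
    have h := congrArg conj ((hH b c).2.2 a a')
    simpa [map_sum, map_mul, apply_ite, mul_comm] using h
  refine ⟨?_, ?_, ?_⟩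
  · simp [Fintype.card_prod, mul_pow]; ring
  · rintro ⟨a, b, c⟩
    constructor
    · ext ⟨d, e⟩ ⟨d', e'⟩
      simp only [Matrix.mul_apply, Matrix.conjTranspose_apply, Matrix.of_apply, Matrix.one_apply,
        Fintype.sum_prod_type, ← starRingEnd_apply, map_mul]
      calc ∑ f, ∑ g, H b c a f * V c f b e g * Q c f d *
              (conj (H b c a f) * conj (V c f b e' g) * conj (Q c f d'))
          = ∑ f, (if e = e' then (1:ℂ) else 0) * (Q c f d * conj (Q c f d')) := by
            refine Finset.sum_congr rfl fun f _ => ?_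
            rw [← hVuu c f b e e', Finset.sum_mul]
            refine Finset.sum_congr rfl fun g _ => ?_
            linear_combination (V c f b e g * conj (V c f b e' g) *
              (Q c f d * conj (Q c f d'))) * hHabs b c a f
        _ = (if e = e' then (1:ℂ) else 0) * (if d = d' then (1:ℂ) else 0) := by
            rw [← Finset.mul_sum, hQflip]
        _ = if (d, e) = (d', e') then 1 else 0 := by
            by_cases hd : d = d' <;> by_cases he : e = e' <;> simp [hd, he, Prod.ext_iff]
    · ext ⟨f, g⟩ ⟨f', g'⟩
      simp only [Matrix.mul_apply, Matrix.conjTranspose_apply, Matrix.of_apply, Matrix.one_apply,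
        Fintype.sum_prod_type, ← starRingEnd_apply, map_mul]
      calc ∑ d, ∑ e, conj (H b c a f) * conj (V c f b e g) * conj (Q c f d) *
              (H b c a f' * V c f' b e g' * Q c f' d)
          = (conj (H b c a f) * H b c a f') * ((∑ d, conj (Q c f d) * Q c f' d) *
              (∑ e, conj (V c f b e g) * V c f' b e g')) := by
            rw [Finset.sum_mul_sum]
            simp only [Finset.mul_sum]
            exact Finset.sum_congr rfl fun d _ => Finset.sum_congr rfl fun e _ => by ring
        _ = (conj (H b c a f) * H b c a f') * ((if f = f' then (1:ℂ) else 0) *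
              (∑ e, conj (V c f b e g) * V c f' b e g')) := by rw [hQrow c f f']
        _ = if (f, g) = (f', g') then 1 else 0 := by
            by_cases hf : f = f'
            · subst hf
              rw [hVuu2 c f b g g']
              have h1 : conj (H b c a f) * H b c a f = 1 := by
                rw [mul_comm]; exact hHabs b c a f
              by_cases hg : g = g' <;> simp [hg, h1, Prod.ext_iff]
            · simp [hf, Prod.ext_iff]
  · rintro ⟨a, b, c⟩ ⟨a', b', c'⟩
    simp only [Matrix.trace, Matrix.diag, Matrix.mul_apply, Matrix.conjTranspose_apply,
      Matrix.of_apply, Fintype.sum_prod_type, ← starRingEnd_apply, map_mul,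
      Fintype.card_prod, Fintype.card_fin]
    calc ∑ f, ∑ g, ∑ d, ∑ e, conj (H b c a f) * conj (V c f b e g) * conj (Q c f d) *
            (H b' c' a' f * V c' f b' e g * Q c' f d)
        = ∑ f, (conj (H b c a f) * H b' c' a' f) * ((∑ d, conj (Q c f d) * Q c' f d) *
            (∑ g, ∑ e, conj (V c f b e g) * V c' f b' e g)) := by
          refine Finset.sum_congr rfl fun f _ => ?_
          rw [Finset.sum_comm, Finset.sum_mul_sum, Finset.mul_sum]
          refine Finset.sum_congr rfl fun d _ => ?_
          rw [Finset.mul_sum]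
          refine Finset.sum_congr rfl fun g _ => ?_
          rw [Finset.mul_sum, Finset.mul_sum]
          refine Finset.sum_congr rfl fun e _ => ?_
          ring
      _ = if (a, b, c) = (a', b', c') then ((n * m : ℕ) : ℂ) else 0 := by
          by_cases hc : c = c'
          · subst hc
            by_cases hb : b = b'
            · subst hb
              have e1 : ∀ f : Fin n, (conj (H b c a f) * H b c a' f) *
                  ((∑ d, conj (Q c f d) * Q c f d) *
                    (∑ g, ∑ e, conj (V c f b e g) * V c f b e g))
                  = conj (H b c a f) * H b c a' f * (m:ℂ) := by
                intro f
                rw [hQcol c c f, hVtr c f b b, if_pos rfl, if_pos rfl, one_mul]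
              rw [Finset.sum_congr rfl fun f _ => e1 f, ← Finset.sum_mul, hHconj]
              by_cases ha : a = a'
              · simp only [ha, if_pos rfl, Prod.mk.injEq, and_self, if_true]
                push_cast; ring
              · simp [ha, Prod.ext_iff]
            · have e1 : ∀ f : Fin n, (conj (H b c a f) * H b' c a' f) *
                  ((∑ d, conj (Q c f d) * Q c f d) *
                    (∑ g, ∑ e, conj (V c f b e g) * V c f b' e g)) = 0 := by
                intro f
                rw [hVtr c f b b', if_neg hb]; ring
              rw [Finset.sum_congr rfl fun f _ => e1 f]
              simp [hb, Prod.ext_iff]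
          · have e1 : ∀ f : Fin n, (conj (H b c a f) * H b' c' a' f) *
                ((∑ d, conj (Q c f d) * Q c' f d) *
                  (∑ g, ∑ e, conj (V c f b e g) * V c' f b' e g)) = 0 := by
              intro f
              rw [hQcol c c' f, if_neg hc]; ring
            rw [Finset.sum_congr rfl fun f _ => e1 f]
            simp [hc, Prod.ext_iff]
end
end

section
/- Let n, m ≥ 1. Let (H^{b,c})_{b∈[n], c∈[m]} be an (n, m)-controlled family of Hadamard matrices of dimension nm, with rows indexed by [nm] and columns indexed by [n]×[m], so entries are H^{b,c}_{a,(e,g)}. Let (P^{c,g})_{c,g∈[m]} be an (m, m)-controlled family of quantum Latin squares of dimension n, and let Q be a quantum Latin square of dimension m. For a ∈ [nm], b ∈ [n], c ∈ [m], define the matrix U_{(a,b,c)} with rows indexed by [m]×[n] and columns indexed by [m]×[n], whose entry at row (d,e) and column (g,f) is H^{b,c}_{a,(e,g)} · P^{c,g}_{e,b,f} · Q_{c,g,d}, for d, g ∈ [m] and e, f ∈ [n]. Then (U_{(a,b,c)})_{(a,b,c)∈[nm]×[n]×[m]} is a unitary error basis of dimension nm. -/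
open scoped ComplexConjugate Matrix

noncomputable section

private lemma sum_prod_mul {α β : Type*} [Fintype α] [Fintype β] (f : α → ℂ) (g : β → ℂ) :
    ∑ x : α × β, f x.1 * g x.2 = (∑ a, f a) * (∑ b, g b) := by
  rw [Fintype.sum_prod_type, Finset.sum_mul_sum]

private lemma sum_prod_rearrange {α β γ : Type*} [Fintype α] [Fintype β] [Fintype γ]
    (F : γ → α → β → ℂ) :
    ∑ x : α × β, ∑ e : γ, F e x.1 x.2 = ∑ g : α, ∑ e : γ, ∑ f : β, F e g f := by
  rw [Fintype.sum_prod_type]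
  exact Finset.sum_congr rfl fun g _ => Finset.sum_comm

private lemma qls_col_dual {A X : Type*} [Fintype A] [Fintype X] [DecidableEq A] [DecidableEq X]
    {Q : A → A → X → ℂ} (h : IsQLS Q) (c : A) (i j : X) :
    ∑ a, conj (Q a c i) * Q a c j = if i = j then 1 else 0 := by
  obtain ⟨hcard, -, hcol⟩ := h
  set N : Matrix A X ℂ := Matrix.of fun a i => Q a c i with hN
  have h1 : N * Nᴴ = 1 := by
    ext a b
    have key : ∑ i, Q a c i * conj (Q b c i) = conj (∑ i, conj (Q a c i) * Q b c i) := by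
      rw [map_sum]
      exact Finset.sum_congr rfl fun i _ => by rw [map_mul, Complex.conj_conj, mul_comm]
    simp only [Matrix.mul_apply, Matrix.conjTranspose_apply, hN, Matrix.of_apply,
      Matrix.one_apply]
    simp only [starRingEnd_apply] at key
    rw [key]
    simp only [← starRingEnd_apply]
    rw [hcol a b c]
    split <;> simp
  have h2 : Nᴴ * N = 1 :=
    (Matrix.mul_eq_one_comm_of_equiv (Fintype.equivOfCardEq hcard.symm)).mp h1
  have h3 := congrFun (congrFun h2 i) j
  simpa [Matrix.mul_apply, Matrix.conjTranspose_apply, hN, Matrix.one_apply] using h3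

/-- an (n,m)-controlled family of nm-dimensional Hadamard matrices (rows
indexed by [nm], columns by [n]×[m]), an (m,m)-controlled family of n-dimensional
quantum Latin squares, and an m-dimensional quantum Latin square produce an
nm-dimensional UEB whose entry at row (d,e) and column (g,f) is
`H^{b,c}_{a,(e,g)} · P^{c,g}_{e,b,f} · Q_{c,g,d}`. -/
theorem ternary_ueb_b (n m : ℕ) (hn : 1 ≤ n) (hm : 1 ≤ m)
    (H : Fin n → Fin m → Matrix (Fin (n * m)) (Fin n × Fin m) ℂ)
    (P : Fin m → Fin m → (Fin n → Fin n → Fin n → ℂ))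
    (Q : Fin m → Fin m → Fin m → ℂ)
    (hH : ∀ b c, IsHadamard (H b c))
    (hP : ∀ c g, IsQLS (P c g))
    (hQ : IsQLS Q) :
    IsUEB (fun abc : Fin (n * m) × Fin n × Fin m =>
      Matrix.of fun (de gf : Fin m × Fin n) =>
        H abc.2.1 abc.2.2 abc.1 (de.2, gf.1) * P abc.2.2 gf.1 de.2 abc.2.1 gf.2 *
          Q abc.2.2 gf.1 de.1) := by
  have key : ∀ (a a' : Fin (n * m)) (b b' : Fin n) (c c' g g' : Fin m) (f f' : Fin n),
      ∑ de : Fin m × Fin n,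
        conj (H b c a (de.2, g) * P c g de.2 b f * Q c g de.1) *
          (H b' c' a' (de.2, g') * P c' g' de.2 b' f' * Q c' g' de.1)
      = (∑ d, conj (Q c g d) * Q c' g' d) *
        (∑ e, conj (H b c a (e, g)) * H b' c' a' (e, g') *
          (conj (P c g e b f) * P c' g' e b' f')) := by
    intro a a' b b' c c' g g' f f'
    rw [← sum_prod_mul (fun d => conj (Q c g d) * Q c' g' d)
      (fun e => conj (H b c a (e, g)) * H b' c' a' (e, g') *
        (conj (P c g e b f) * P c' g' e b' f'))]
    refine Finset.sum_congr rfl fun de _ => ?_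
    simp only [map_mul]
    ring
  have hH1 : ∀ (b : Fin n) (c : Fin m) (a : Fin (n * m)) (e : Fin n) (g : Fin m),
      conj (H b c a (e, g)) * H b c a (e, g) = 1 := by
    intro b c a e g
    rw [mul_comm, Complex.mul_conj, Complex.normSq_eq_norm_sq, (hH b c).2.1 a (e, g)]
    norm_num
  refine ⟨by simp [Fintype.card_prod]; ring, ?_, ?_⟩
  · rintro ⟨a, b, c⟩
    have h2 : (Matrix.of fun (de gf : Fin m × Fin n) =>
        H b c a (de.2, gf.1) * P c gf.1 de.2 b gf.2 * Q c gf.1 de.1)ᴴ *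
        (Matrix.of fun (de gf : Fin m × Fin n) =>
        H b c a (de.2, gf.1) * P c gf.1 de.2 b gf.2 * Q c gf.1 de.1) = 1 := by
      ext ⟨g, f⟩ ⟨g', f'⟩
      simp only [Matrix.mul_apply, Matrix.conjTranspose_apply, Matrix.of_apply,
        ← starRingEnd_apply]
      rw [key a a b b c c g g' f f', hQ.2.1 c g g']
      by_cases hg : g = g'
      · subst hg
        rw [if_pos rfl, one_mul]
        rw [Finset.sum_congr rfl (fun e _ => by rw [hH1 b c a e g, one_mul]),
          qls_col_dual (hP c g) b f f']
        simp [Matrix.one_apply, Prod.ext_iff]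
      · rw [if_neg hg, zero_mul]
        simp [Matrix.one_apply, Prod.ext_iff, hg]
    exact ⟨mul_eq_one_comm.mpr h2, h2⟩
  · rintro ⟨a, b, c⟩ ⟨a', b', c'⟩
    simp only [Matrix.trace, Matrix.diag_apply, Matrix.mul_apply, Matrix.conjTranspose_apply,
      Matrix.of_apply]
    rw [Finset.sum_congr rfl (fun gf _ =>
      key a a' b b' c c' gf.1 gf.1 gf.2 gf.2)]
    rw [Finset.sum_congr rfl (fun gf _ => by rw [hQ.2.2 c c' gf.1])]
    by_cases hc : c = c'
    · subst hc
      simp only [eq_self_iff_true, if_true, one_mul]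
      rw [sum_prod_rearrange (fun e g f => conj (H b c a (e, g)) * H b' c a' (e, g) *
        (conj (P c g e b f) * P c g e b' f))]
      rw [Finset.sum_congr rfl (fun g _ => Finset.sum_congr rfl (fun e _ => by
        rw [← Finset.mul_sum, (hP c g).2.1 e b b']))]
      by_cases hb : b = b'
      · subst hb
        simp only [eq_self_iff_true, if_true, mul_one]
        have hconj : (∑ e : Fin n, ∑ g : Fin m, conj (H b c a (e, g)) * H b c a' (e, g))
            = if a = a' then ((n * m : ℕ) : ℂ) else 0 := by
          have h0 := congrArg conj ((hH b c).2.2 a a')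
          rw [map_sum] at h0
          simp only [map_mul, Complex.conj_conj] at h0
          rw [Fintype.sum_prod_type] at h0
          rw [h0]
          simp [apply_ite conj]
        rw [Finset.sum_comm, hconj]
        simp only [Fintype.card_prod, Fintype.card_fin, Prod.mk.injEq]
        by_cases ha : a = a' <;> simp [ha, Nat.mul_comm]
      · simp only [if_neg hb, mul_zero, Finset.sum_const_zero]
        have : ¬ ((a, b, c) = (a', b', c)) := by simp [Prod.ext_iff, hb]
        rw [if_neg this]
    · simp only [if_neg hc, zero_mul, Finset.sum_const_zero]
      have : ¬ ((a, b, c) = (a', b', c')) := by simp [Prod.ext_iff, hc]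
      rw [if_neg this]
end
end

section
/- Let n ≥ 1. Let (V^b)_{b∈[n²]} be an n²-controlled family of unitary error bases of dimension n², with elements indexed by a ∈ [n⁴], so entries are V^b_{a,r,e} with r, e ∈ [n²]. Let Q be a quantum Latin square of dimension n², and let W be a unitary error basis on ℂ^n. For a ∈ [n⁴] and b ∈ [n²], define the matrix U_{(a,b)} with rows and columns indexed by [n²]×[n], whose entry at row (c,d) and column (e,f) is ∑_{r∈[n²]} V^b_{a,r,e} · Q_{b,r,c} · W_{r,d,f}, for c, e ∈ [n²] and d, f ∈ [n]. Then (U_{(a,b)})_{(a,b)∈[n⁴]×[n²]} is a unitary error basis of dimension n³. -/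
open scoped ComplexConjugate Matrix

noncomputable section

lemma ueb_rows {A R C : Type*} [Fintype A] [Fintype R] [Fintype C]
    [DecidableEq A] [DecidableEq R] [DecidableEq C] {U : A → Matrix R C ℂ}
    (h : IsUEB U) (a : A) (r s : R) :
    ∑ e, U a r e * conj (U a s e) = if r = s then 1 else 0 := by
  have := congrFun (congrFun (h.2.1 a).1 r) s
  simpa [Matrix.mul_apply, Matrix.conjTranspose_apply, Matrix.one_apply] using this

lemma ueb_cols {A R C : Type*} [Fintype A] [Fintype R] [Fintype C]
    [DecidableEq A] [DecidableEq R] [DecidableEq C] {U : A → Matrix R C ℂ}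
    (h : IsUEB U) (a : A) (e e' : C) :
    ∑ r, conj (U a r e) * U a r e' = if e = e' then 1 else 0 := by
  have := congrFun (congrFun (h.2.1 a).2 e) e'
  simpa [Matrix.mul_apply, Matrix.conjTranspose_apply, Matrix.one_apply] using this

lemma ueb_tr {A R C : Type*} [Fintype A] [Fintype R] [Fintype C]
    [DecidableEq A] [DecidableEq R] [DecidableEq C] {U : A → Matrix R C ℂ}
    (h : IsUEB U) (a b : A) :
    ∑ e, ∑ r, conj (U a r e) * U b r e = if a = b then (Fintype.card R : ℂ) else 0 := by
  have := h.2.2 a b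
  simpa [Matrix.trace, Matrix.diag, Matrix.mul_apply, Matrix.conjTranspose_apply] using this

lemma qls_col_unitary {A X : Type*} [Fintype A] [Fintype X] [DecidableEq A] [DecidableEq X]
    {Q : A → A → X → ℂ} (h : IsQLS Q) (a : A) (c c' : X) :
    ∑ r, Q a r c * conj (Q a r c') = if c = c' then 1 else 0 := by
  obtain ⟨hcard, hrow, _⟩ := h
  obtain ⟨e⟩ := Fintype.truncEquivOfCardEq hcard
  set f : A → A → ℂ := fun b i => conj (Q a b (e.symm i)) with hf
  have h1 : Matrix.of f * (Matrix.of f)ᴴ = 1 := by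
    ext b c
    rw [Matrix.mul_apply, Matrix.one_apply]
    have step : ∀ j : A, Matrix.of f b j * (Matrix.of f)ᴴ j c
        = conj (Q a b (e.symm j)) * Q a c (e.symm j) := by
      intro j
      rw [Matrix.conjTranspose_apply]
      simp [hf]
    rw [Finset.sum_congr rfl fun j _ => step j,
        Fintype.sum_equiv e.symm _ (fun i => conj (Q a b i) * Q a c i) (fun j => rfl),
        hrow a b c]
  have h2 := mul_eq_one_comm.mp h1
  have h3 := congrFun (congrFun h2 (e c)) (e c')
  rw [Matrix.mul_apply, Matrix.one_apply] at h3
  have step2 : ∀ b : A, (Matrix.of f)ᴴ (e c) b * Matrix.of f b (e c')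
      = Q a b c * conj (Q a b c') := by
    intro b
    rw [Matrix.conjTranspose_apply]
    simp [hf]
  rw [Finset.sum_congr rfl fun b _ => step2 b] at h3
  simpa using h3

/-- an n²-controlled family of n²-dimensional UEBs (elements indexed by
[n⁴]), an n²-dimensional quantum Latin square, and a UEB on ℂ^n produce an
n³-dimensional UEB whose entry at row (c,d) and column (e,f) is
`∑_{r∈[n²]} V^b_{a,r,e} · Q_{b,r,c} · W_{r,d,f}`. -/
theorem simple_ternary_ueb (n : ℕ) (hn : 1 ≤ n)
    (V : Fin (n ^ 2) → Fin (n ^ 4) → Matrix (Fin (n ^ 2)) (Fin (n ^ 2)) ℂ)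
    (Q : Fin (n ^ 2) → Fin (n ^ 2) → Fin (n ^ 2) → ℂ)
    (W : Fin (n ^ 2) → Matrix (Fin n) (Fin n) ℂ)
    (hV : ∀ b, IsUEB (V b))
    (hQ : IsQLS Q)
    (hW : IsUEB W) :
    IsUEB (fun ab : Fin (n ^ 4) × Fin (n ^ 2) =>
      Matrix.of fun (cd ef : Fin (n ^ 2) × Fin n) =>
        ∑ r : Fin (n ^ 2), V ab.2 ab.1 r ef.1 * Q ab.2 r cd.1 * W r cd.2 ef.2) := by
  set P : Fin (n ^ 2) → Matrix (Fin (n ^ 2) × Fin n) (Fin (n ^ 2) × Fin n) ℂ :=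
    fun b => Matrix.of fun cd rf => Q b rf.1 cd.1 * W rf.1 cd.2 rf.2 with hPdef
  set D : Fin (n ^ 4) → Fin (n ^ 2) → Matrix (Fin (n ^ 2) × Fin n) (Fin (n ^ 2) × Fin n) ℂ :=
    fun a b => Matrix.of fun rf ef => if rf.2 = ef.2 then V b a rf.1 ef.1 else 0 with hDdef
  have hfac : ∀ ab : Fin (n ^ 4) × Fin (n ^ 2),
      (Matrix.of fun (cd ef : Fin (n ^ 2) × Fin n) =>
        ∑ r : Fin (n ^ 2), V ab.2 ab.1 r ef.1 * Q ab.2 r cd.1 * W r cd.2 ef.2)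
      = P ab.2 * D ab.1 ab.2 := by
    rintro ⟨a, b⟩
    ext ⟨c, d⟩ ⟨e, f⟩
    rw [Matrix.mul_apply, Fintype.sum_prod_type]
    simp only [hPdef, hDdef, Matrix.of_apply, mul_ite, mul_zero]
    simp only [Finset.sum_ite_eq', Finset.mem_univ, if_true]
    exact Finset.sum_congr rfl fun r _ => by ring
  have hPu : ∀ b, P b * (P b)ᴴ = 1 := by
    intro b
    ext ⟨c, d⟩ ⟨c', d'⟩
    rw [Matrix.mul_apply, Matrix.one_apply, Fintype.sum_prod_type]
    have step : ∀ r : Fin (n ^ 2),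
        ∑ f : Fin n, P b (c, d) (r, f) * (P b)ᴴ (r, f) (c', d')
        = (Q b r c * conj (Q b r c')) * ∑ f, W r d f * conj (W r d' f) := by
      intro r
      rw [Finset.mul_sum]
      refine Finset.sum_congr rfl fun f _ => ?_
      rw [Matrix.conjTranspose_apply]
      simp only [hPdef, Matrix.of_apply, star_mul', starRingEnd_apply]
      ring
    rw [Finset.sum_congr rfl fun r _ => step r]
    simp only [ueb_rows hW]
    by_cases hd : d = d'
    · subst hd
      simp only [if_true, mul_one, qls_col_unitary hQ, Prod.mk.injEq]
      by_cases hc : c = c' <;> simp [hc]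
    · simp [hd, Prod.ext_iff]
  have hDu : ∀ a b, D a b * (D a b)ᴴ = 1 := by
    intro a b
    ext ⟨r, f⟩ ⟨r', f'⟩
    rw [Matrix.mul_apply, Matrix.one_apply, Fintype.sum_prod_type]
    have step : ∀ e : Fin (n ^ 2),
        ∑ g : Fin n, D a b (r, f) (e, g) * (D a b)ᴴ (e, g) (r', f')
        = if f = f' then V b a r e * conj (V b a r' e) else 0 := by
      intro e
      have : ∀ g : Fin n, D a b (r, f) (e, g) * (D a b)ᴴ (e, g) (r', f')
          = if f = g then (if f' = g then V b a r e * conj (V b a r' e) else 0) else 0 := by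
        intro g
        rw [Matrix.conjTranspose_apply]
        simp only [hDdef, Matrix.of_apply]
        by_cases h1 : f = g <;> by_cases h2 : f' = g <;> simp [h1, h2]
      rw [Finset.sum_congr rfl fun g _ => this g, Finset.sum_ite_eq]
      simp only [Finset.mem_univ, if_true]
      by_cases h2 : f' = f
      · subst h2; simp
      · have hne : ¬ (f = f') := fun h => h2 h.symm
        rw [if_neg hne, if_neg h2]
    rw [Finset.sum_congr rfl fun e _ => step e]
    by_cases hf : f = f'
    · subst hf
      simp only [if_true, Prod.mk.injEq, and_true]
      exact ueb_rows (hV b) a r r'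
    · simp [hf, Prod.ext_iff]
  refine ⟨?_, ?_, ?_⟩
  · simp only [Fintype.card_prod, Fintype.card_fin]
    ring
  · rintro ⟨a, b⟩
    have h1 : P b * D a b * (P b * D a b)ᴴ = 1 := by
      rw [Matrix.conjTranspose_mul]
      have : P b * D a b * ((D a b)ᴴ * (P b)ᴴ) = P b * (D a b * (D a b)ᴴ) * (P b)ᴴ := by
        simp only [Matrix.mul_assoc]
      rw [this, hDu a b, Matrix.mul_one, hPu b]
    constructor
    · dsimp only
      rw [hfac ⟨a, b⟩]
      exact h1
    · dsimp only
      rw [hfac ⟨a, b⟩]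
      exact mul_eq_one_comm.mp h1
  · rintro ⟨a, b⟩ ⟨a', b'⟩
    dsimp only
    rw [hfac ⟨a, b⟩, hfac ⟨a', b'⟩, Matrix.conjTranspose_mul]
    have assoc1 : (D a b)ᴴ * (P b)ᴴ * (P b' * D a' b')
        = (D a b)ᴴ * ((P b)ᴴ * P b' * D a' b') := by
      simp only [Matrix.mul_assoc]
    rw [assoc1, Matrix.trace_mul_comm, Matrix.mul_assoc]
    -- now : trace ((P b)ᴴ * P b' * (D a' b' * (D a b)ᴴ))
    have hN : ∀ (r : Fin (n ^ 2)) (f : Fin n) (s : Fin (n ^ 2)) (g : Fin n),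
        ((P b)ᴴ * P b') (r, f) (s, g)
        = (∑ c, conj (Q b r c) * Q b' s c) * (∑ d, conj (W r d f) * W s d g) := by
      intro r f s g
      rw [Matrix.mul_apply, Fintype.sum_prod_type, Finset.sum_mul_sum]
      refine Finset.sum_congr rfl fun c _ => Finset.sum_congr rfl fun d _ => ?_
      rw [Matrix.conjTranspose_apply]
      simp only [hPdef, Matrix.of_apply, star_mul', starRingEnd_apply]
      ring
    have hM : ∀ (s : Fin (n ^ 2)) (g : Fin n) (r : Fin (n ^ 2)) (f : Fin n),
        (D a' b' * (D a b)ᴴ) (s, g) (r, f)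
        = if g = f then ∑ e, V b' a' s e * conj (V b a r e) else 0 := by
      intro s g r f
      rw [Matrix.mul_apply, Fintype.sum_prod_type]
      have point : ∀ (e : Fin (n ^ 2)) (h : Fin n),
          D a' b' (s, g) (e, h) * (D a b)ᴴ (e, h) (r, f)
          = if g = h then (if f = h then V b' a' s e * conj (V b a r e) else 0) else 0 := by
        intro e h
        rw [Matrix.conjTranspose_apply]
        simp only [hDdef, Matrix.of_apply]
        by_cases h1 : g = h <;> by_cases h2 : f = h <;> simp [h1, h2]
      have inner : ∀ e : Fin (n ^ 2),
          (∑ h : Fin n, if g = h then (if f = h then V b' a' s e * conj (V b a r e) else 0) else 0)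
          = if g = f then V b' a' s e * conj (V b a r e) else 0 := by
        intro e
        rw [Finset.sum_ite_eq]
        simp only [Finset.mem_univ, if_true]
        by_cases h2 : f = g
        · subst h2; simp
        · rw [if_neg h2, if_neg fun h => h2 h.symm]
      rw [Finset.sum_congr rfl fun e (_ : e ∈ Finset.univ) =>
        (Finset.sum_congr rfl fun h _ => point e h).trans (inner e)]
      by_cases hgf : g = f
      · simp [hgf]
      · simp [hgf]
    have expand : Matrix.trace ((P b)ᴴ * P b' * (D a' b' * (D a b)ᴴ))
        = ∑ r : Fin (n ^ 2), ∑ f : Fin n, ∑ s : Fin (n ^ 2), ∑ g : Fin n,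
          ((P b)ᴴ * P b') (r, f) (s, g) * (D a' b' * (D a b)ᴴ) (s, g) (r, f) := by
      simp only [Matrix.trace, Matrix.diag_apply, Matrix.mul_apply, Fintype.sum_prod_type]
    rw [expand]
    have step1 : ∀ (r : Fin (n ^ 2)) (f : Fin n),
        (∑ s : Fin (n ^ 2), ∑ g : Fin n,
          ((P b)ᴴ * P b') (r, f) (s, g) * (D a' b' * (D a b)ᴴ) (s, g) (r, f))
        = ∑ s : Fin (n ^ 2),
          ((∑ c, conj (Q b r c) * Q b' s c) * (∑ d, conj (W r d f) * W s d f))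
            * (∑ e, V b' a' s e * conj (V b a r e)) := by
      intro r f
      refine Finset.sum_congr rfl fun s _ => ?_
      have : ∀ g : Fin n,
          ((P b)ᴴ * P b') (r, f) (s, g) * (D a' b' * (D a b)ᴴ) (s, g) (r, f)
          = if g = f then
              ((∑ c, conj (Q b r c) * Q b' s c) * (∑ d, conj (W r d f) * W s d g))
                * (∑ e, V b' a' s e * conj (V b a r e)) else 0 := by
        intro g
        rw [hN, hM]
        by_cases hg : g = f <;> simp [hg]
      rw [Finset.sum_congr rfl fun g _ => this g, Finset.sum_ite_eq']
      simp
    rw [Finset.sum_congr rfl fun r _ => Finset.sum_congr rfl fun f _ => step1 r f]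
    rw [Finset.sum_congr rfl fun r (_ : r ∈ Finset.univ) =>
      Finset.sum_comm (s := Finset.univ) (t := Finset.univ)]
    have step2 : ∀ (r s : Fin (n ^ 2)),
        (∑ f : Fin n,
          ((∑ c, conj (Q b r c) * Q b' s c) * (∑ d, conj (W r d f) * W s d f))
            * (∑ e, V b' a' s e * conj (V b a r e)))
        = ((∑ c, conj (Q b r c) * Q b' s c) * (∑ e, V b' a' s e * conj (V b a r e)))
            * (∑ f, ∑ d, conj (W r d f) * W s d f) := by
      intro r s
      rw [Finset.mul_sum]
      exact Finset.sum_congr rfl fun f _ => by ring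
    rw [Finset.sum_congr rfl fun r _ => Finset.sum_congr rfl fun s _ => step2 r s]
    have hWtr : ∀ r s : Fin (n ^ 2),
        (∑ f : Fin n, ∑ d : Fin n, conj (W r d f) * W s d f)
        = if r = s then (n : ℂ) else 0 := by
      intro r s
      rw [ueb_tr hW r s, Fintype.card_fin]
    have step3 : ∀ r : Fin (n ^ 2),
        (∑ s : Fin (n ^ 2),
          ((∑ c, conj (Q b r c) * Q b' s c) * (∑ e, V b' a' s e * conj (V b a r e)))
            * (∑ f, ∑ d, conj (W r d f) * W s d f))
        = ((if b = b' then (1 : ℂ) else 0) * (∑ e, V b' a' r e * conj (V b a r e))) * n := by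
      intro r
      have : ∀ s : Fin (n ^ 2),
          ((∑ c, conj (Q b r c) * Q b' s c) * (∑ e, V b' a' s e * conj (V b a r e)))
            * (∑ f, ∑ d, conj (W r d f) * W s d f)
          = if r = s then
              ((∑ c, conj (Q b r c) * Q b' s c) * (∑ e, V b' a' s e * conj (V b a r e))) * n
            else 0 := by
        intro s
        rw [hWtr r s]
        by_cases hs : r = s <;> simp [hs]
      rw [Finset.sum_congr rfl fun s _ => this s, Finset.sum_ite_eq]
      simp only [Finset.mem_univ, if_true]
      rw [hQ.2.2 b b' r]
    rw [Finset.sum_congr rfl fun r _ => step3 r]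
    by_cases hb : b = b'
    · subst hb
      simp only [eq_self_iff_true, if_true, one_mul]
      have swap : (∑ r : Fin (n ^ 2), (∑ e, V b a' r e * conj (V b a r e)) * (n : ℂ))
          = (∑ e : Fin (n ^ 2), ∑ r : Fin (n ^ 2), conj (V b a r e) * V b a' r e) * n := by
        rw [← Finset.sum_mul]
        congr 1
        rw [Finset.sum_comm]
        exact Finset.sum_congr rfl fun r _ =>
          Finset.sum_congr rfl fun e _ => mul_comm _ _
      rw [swap, ueb_tr (hV b) a a']
      by_cases ha : a = a'
      · subst ha
        simp only [if_pos rfl, Fintype.card_fin, Fintype.card_prod]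
        push_cast
        ring
      · simp [ha, Prod.ext_iff]
    · simp [hb, Prod.ext_iff]
end
end

section
/- Let n ≥ 1. Let (H^{b,c})_{b,c∈[n²]} be an (n², n²)-controlled family of Hadamard matrices of dimension n², let P and Q be quantum Latin squares of dimension n², and let V be a unitary error basis on ℂ^n. For a, b, c ∈ [n²], define the matrix U_{(a,b,c)} with rows and columns indexed by [n²]×[n], whose entry at row (d,e) and column (f,g) is ∑_{r∈[n²]} H^{b,c}_{a,r} · P_{c,r,d} · Q_{r,b,f} · V_{r,e,g}, for d, f ∈ [n²] and e, g ∈ [n]. Then (U_{(a,b,c)})_{(a,b,c)∈[n²]×[n²]×[n²]} is a unitary error basis of dimension n³. -/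
open scoped ComplexConjugate Matrix

noncomputable section

private lemma expand_sum {ι₁ ι₂ κ : Type*} [Fintype ι₁] [Fintype ι₂] [Fintype κ]
    (W : ι₁ → κ → ℂ) (Z : ι₂ → κ → ℂ) :
    ∑ k, (∑ r, W r k) * conj (∑ s, Z s k) = ∑ r, ∑ s, ∑ k, W r k * conj (Z s k) := by
  simp_rw [map_sum, Finset.sum_mul, Finset.mul_sum]
  rw [Finset.sum_comm]
  exact Finset.sum_congr rfl fun r _ => Finset.sum_comm

private lemma factor2 {κ₁ κ₂ : Type*} [Fintype κ₁] [Fintype κ₂] (Y : κ₁ → ℂ) (Z : κ₂ → ℂ) :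
    ∑ fg : κ₁ × κ₂, Y fg.1 * Z fg.2 = (∑ f, Y f) * ∑ g, Z g := by
  rw [Fintype.sum_prod_type]
  exact (Finset.sum_mul_sum _ _ _ _).symm

private lemma factor2' {κ₁ κ₂ : Type*} [Fintype κ₁] [Fintype κ₂] (C : ℂ) (Y : κ₁ → ℂ)
    (Z : κ₂ → ℂ) :
    ∑ fg : κ₁ × κ₂, C * Y fg.1 * Z fg.2 = C * ((∑ f, Y f) * ∑ g, Z g) := by
  calc ∑ fg : κ₁ × κ₂, C * Y fg.1 * Z fg.2
      = ∑ fg : κ₁ × κ₂, (fun f => C * Y f) fg.1 * Z fg.2 := rfl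
    _ = (∑ f, C * Y f) * ∑ g, Z g := factor2 (fun f => C * Y f) Z
    _ = C * ((∑ f, Y f) * ∑ g, Z g) := by rw [← Finset.mul_sum, mul_assoc]

private lemma factor3 {κ₁ κ₂ κ₃ κ₄ : Type*} [Fintype κ₁] [Fintype κ₂] [Fintype κ₃] [Fintype κ₄]
    (X : κ₁ → ℂ) (Y : κ₃ → ℂ) (Z : κ₂ → κ₄ → ℂ) :
    ∑ k : (κ₁ × κ₂) × κ₃ × κ₄, X k.1.1 * Y k.2.1 * Z k.1.2 k.2.2
      = (∑ d, X d) * (∑ f, Y f) * ∑ e, ∑ g, Z e g := by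
  calc ∑ k : (κ₁ × κ₂) × κ₃ × κ₄, X k.1.1 * Y k.2.1 * Z k.1.2 k.2.2
      = ∑ d, ∑ e, ∑ f, ∑ g, X d * Y f * Z e g := by
        rw [Fintype.sum_prod_type]; simp_rw [Fintype.sum_prod_type]
    _ = ∑ d, ∑ f, ∑ e, ∑ g, X d * Y f * Z e g :=
        Finset.sum_congr rfl fun d _ => Finset.sum_comm
    _ = (∑ d, X d) * (∑ f, Y f) * ∑ e, ∑ g, Z e g := by
        rw [Finset.sum_mul_sum, Finset.sum_mul]
        refine Finset.sum_congr rfl fun d _ => ?_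
        rw [Finset.sum_mul]
        refine Finset.sum_congr rfl fun f _ => ?_
        rw [Finset.mul_sum]
        refine Finset.sum_congr rfl fun e _ => ?_
        rw [Finset.mul_sum]

private lemma factor3' {κ₁ κ₂ κ₃ κ₄ : Type*} [Fintype κ₁] [Fintype κ₂] [Fintype κ₃] [Fintype κ₄]
    (C : ℂ) (X : κ₁ → ℂ) (Y : κ₃ → ℂ) (Z : κ₂ → κ₄ → ℂ) :
    ∑ k : (κ₁ × κ₂) × κ₃ × κ₄, C * X k.1.1 * Y k.2.1 * Z k.1.2 k.2.2
      = C * ((∑ d, X d) * (∑ f, Y f) * ∑ e, ∑ g, Z e g) := by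
  calc ∑ k : (κ₁ × κ₂) × κ₃ × κ₄, C * X k.1.1 * Y k.2.1 * Z k.1.2 k.2.2
      = ∑ k : (κ₁ × κ₂) × κ₃ × κ₄, (fun d => C * X d) k.1.1 * Y k.2.1 * Z k.1.2 k.2.2 := rfl
    _ = (∑ d, C * X d) * (∑ f, Y f) * ∑ e, ∑ g, Z e g := factor3 (fun d => C * X d) Y Z
    _ = C * ((∑ d, X d) * (∑ f, Y f) * ∑ e, ∑ g, Z e g) := by
        rw [← Finset.mul_sum]; ring

private lemma flip_orth {ι : Type*} [Fintype ι] [DecidableEq ι] (M : ι → ι → ℂ)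
    (h : ∀ i j, ∑ k, conj (M i k) * M j k = if i = j then 1 else 0) (i j : ι) :
    ∑ k, conj (M k i) * M k j = if i = j then 1 else 0 := by
  have h1 : (Matrix.of M) * (Matrix.of M)ᴴ = 1 := by
    ext p q
    simp only [Matrix.mul_apply, Matrix.conjTranspose_apply, Matrix.of_apply, Matrix.one_apply,
      ← starRingEnd_apply]
    have hc : ∑ x, M p x * conj (M q x) = conj (∑ x, conj (M p x) * M q x) := by
      simp [map_sum, map_mul, mul_comm]
    rw [hc, h p q]
    split_ifs <;> simp
  have h2 : (Matrix.of M)ᴴ * (Matrix.of M) = 1 := mul_eq_one_comm.mp h1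
  have h3 := Matrix.ext_iff.mpr h2 i j
  simpa [Matrix.mul_apply, Matrix.conjTranspose_apply, Matrix.one_apply,
    ← starRingEnd_apply] using h3


/-- an (n²,n²)-controlled family of n²-dimensional Hadamard matrices, two
n²-dimensional quantum Latin squares, and a UEB on ℂ^n produce an n³-dimensional UEB
whose entry at row (d,e) and column (f,g) is
`∑_{r∈[n²]} H^{b,c}_{a,r} · P_{c,r,d} · Q_{r,b,f} · V_{r,e,g}`. -/
theorem quaternary_ueb (n : ℕ) (hn : 1 ≤ n)
    (H : Fin (n ^ 2) → Fin (n ^ 2) → Matrix (Fin (n ^ 2)) (Fin (n ^ 2)) ℂ)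
    (P Q : Fin (n ^ 2) → Fin (n ^ 2) → Fin (n ^ 2) → ℂ)
    (V : Fin (n ^ 2) → Matrix (Fin n) (Fin n) ℂ)
    (hH : ∀ b c, IsHadamard (H b c))
    (hP : IsQLS P) (hQ : IsQLS Q)
    (hV : IsUEB V) :
    IsUEB (fun abc : Fin (n ^ 2) × Fin (n ^ 2) × Fin (n ^ 2) =>
      Matrix.of fun (de fg : Fin (n ^ 2) × Fin n) =>
        ∑ r : Fin (n ^ 2),
          H abc.2.1 abc.2.2 abc.1 r * P abc.2.2 r de.1 * Q r abc.2.1 fg.1 *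
            V r de.2 fg.2) := by
  obtain ⟨hPcard, hProw, hPcol⟩ := hP
  obtain ⟨hQcard, hQrow, hQcol⟩ := hQ
  obtain ⟨hVcard, hVuni, hVtr⟩ := hV
  -- derived scalar facts
  have hHabs : ∀ b c a r, H b c a r * conj (H b c a r) = 1 := fun b c a r => by
    rw [Complex.mul_conj, Complex.normSq_eq_norm_sq, (hH b c).2.1 a r]
    norm_num
  have hHsum : ∀ b c a a', ∑ r, H b c a r * conj (H b c a' r)
      = if a = a' then ((n ^ 2 : ℕ) : ℂ) else 0 := fun b c a a' => by
    have h := (hH b c).2.2 a a'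
    simpa [Fintype.card_fin] using h
  have hPflip : ∀ c d d', ∑ r, conj (P c r d) * P c r d' = if d = d' then 1 else 0 :=
    fun c => flip_orth (fun r i => P c r i) (fun r s => hProw c r s)
  have hPd : ∀ c d d', ∑ r, P c r d * conj (P c r d') = if d = d' then 1 else 0 := by
    intro c d d'
    calc ∑ r, P c r d * conj (P c r d') = conj (∑ r, conj (P c r d) * P c r d') := by
          simp [map_sum, map_mul, mul_comm]
      _ = conj (if d = d' then 1 else 0) := by rw [hPflip c d d']
      _ = if d = d' then 1 else 0 := by split_ifs <;> simp
  have hQflip : ∀ b f f', ∑ r, conj (Q r b f) * Q r b f' = if f = f' then 1 else 0 :=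
    fun b => flip_orth (fun r i => Q r b i) (fun r s => hQcol r s b)
  have hQd : ∀ b r s, ∑ f, Q r b f * conj (Q s b f) = if r = s then 1 else 0 := by
    intro b r s
    calc ∑ f, Q r b f * conj (Q s b f) = conj (∑ f, conj (Q r b f) * Q s b f) := by
          simp [map_sum, map_mul, mul_comm]
      _ = conj (if r = s then 1 else 0) := by rw [hQcol r s b]
      _ = if r = s then 1 else 0 := by split_ifs <;> simp
  have hVrow : ∀ r e e', ∑ g, V r e g * conj (V r e' g) = if e = e' then 1 else 0 := by
    intro r e e'
    have h3 := Matrix.ext_iff.mpr (hVuni r).1 e e'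
    simpa [Matrix.mul_apply, Matrix.conjTranspose_apply, Matrix.one_apply,
      ← starRingEnd_apply] using h3
  have hVtr' : ∀ r s, ∑ e, ∑ g, V s e g * conj (V r e g) = if r = s then (n : ℂ) else 0 := by
    intro r s
    have h := hVtr r s
    simp only [Matrix.trace, Matrix.diag, Matrix.mul_apply, Matrix.conjTranspose_apply,
      Fintype.card_fin, ← starRingEnd_apply] at h
    calc ∑ e, ∑ g, V s e g * conj (V r e g)
        = ∑ g, ∑ e, conj (V r e g) * V s e g := by
          rw [Finset.sum_comm]
          exact Finset.sum_congr rfl fun g _ => Finset.sum_congr rfl fun e _ => mul_comm _ _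
      _ = if r = s then (n : ℂ) else 0 := h
  refine ⟨?_, ?_, ?_⟩
  · simp only [Fintype.card_prod, Fintype.card_fin]
    ring
  · rintro ⟨a, b, c⟩
    have h1 : (Matrix.of fun (de fg : Fin (n ^ 2) × Fin n) =>
        ∑ r : Fin (n ^ 2), H b c a r * P c r de.1 * Q r b fg.1 * V r de.2 fg.2) *
        (Matrix.of fun (de fg : Fin (n ^ 2) × Fin n) =>
        ∑ r : Fin (n ^ 2), H b c a r * P c r de.1 * Q r b fg.1 * V r de.2 fg.2)ᴴ = 1 := by
      ext ⟨d, e⟩ ⟨d', e'⟩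
      simp only [Matrix.mul_apply, Matrix.conjTranspose_apply, Matrix.of_apply,
        Matrix.one_apply, ← starRingEnd_apply]
      rw [expand_sum (fun (r : Fin (n ^ 2)) (fg : Fin (n ^ 2) × Fin n) =>
          H b c a r * P c r d * Q r b fg.1 * V r e fg.2)
        (fun (s : Fin (n ^ 2)) (fg : Fin (n ^ 2) × Fin n) =>
          H b c a s * P c s d' * Q s b fg.1 * V s e' fg.2)]
      calc ∑ r, ∑ s, ∑ fg : Fin (n ^ 2) × Fin n,
            (H b c a r * P c r d * Q r b fg.1 * V r e fg.2) *
              conj (H b c a s * P c s d' * Q s b fg.1 * V s e' fg.2)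
          = ∑ r, ∑ s, (H b c a r * conj (H b c a s) * (P c r d * conj (P c s d'))) *
              ((∑ f, Q r b f * conj (Q s b f)) * ∑ g, V r e g * conj (V s e' g)) := by
            refine Finset.sum_congr rfl fun r _ => Finset.sum_congr rfl fun s _ => ?_
            rw [← factor2' (H b c a r * conj (H b c a s) * (P c r d * conj (P c s d')))
              (fun f => Q r b f * conj (Q s b f)) (fun g => V r e g * conj (V s e' g))]
            refine Finset.sum_congr rfl fun fg _ => ?_
            simp only [map_mul]
            ring
        _ = ∑ r, (H b c a r * conj (H b c a r) * (P c r d * conj (P c r d'))) *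
              ((1 : ℂ) * ∑ g, V r e g * conj (V r e' g)) := by
            simp_rw [hQd b]
            simp only [mul_ite, mul_one, mul_zero, ite_mul, one_mul, zero_mul,
              Finset.sum_ite_eq, Finset.mem_univ, if_true]
        _ = if (d, e) = ((d', e') : Fin (n ^ 2) × Fin n) then 1 else 0 := by
            simp_rw [hVrow, hHabs, one_mul]
            rw [← Finset.sum_mul, hPd c d d']
            simp only [Prod.mk.injEq]
            split_ifs with h1 h2 h3 <;> simp_all
    exact ⟨h1, mul_eq_one_comm.mp h1⟩
  · rintro ⟨a, b, c⟩ ⟨a', b', c'⟩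
    have hPd2 : ∀ s, ∑ d, P c' s d * conj (P c s d) = if c = c' then 1 else 0 := by
      intro s
      rw [← hPcol c c' s]
      exact Finset.sum_congr rfl fun d _ => mul_comm _ _
    have hQd2 : ∀ s, ∑ f, Q s b' f * conj (Q s b f) = if b = b' then 1 else 0 := by
      intro s
      rw [← hQrow s b b']
      exact Finset.sum_congr rfl fun f _ => mul_comm _ _
    simp only [Matrix.trace, Matrix.diag, Matrix.mul_apply, Matrix.conjTranspose_apply,
      Matrix.of_apply, ← starRingEnd_apply]
    calc ∑ fg : Fin (n ^ 2) × Fin n, ∑ de : Fin (n ^ 2) × Fin n,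
          conj (∑ r, H b c a r * P c r de.1 * Q r b fg.1 * V r de.2 fg.2) *
            ∑ s, H b' c' a' s * P c' s de.1 * Q s b' fg.1 * V s de.2 fg.2
        = ∑ k : (Fin (n ^ 2) × Fin n) × Fin (n ^ 2) × Fin n,
            (∑ s, H b' c' a' s * P c' s k.1.1 * Q s b' k.2.1 * V s k.1.2 k.2.2) *
              conj (∑ r, H b c a r * P c r k.1.1 * Q r b k.2.1 * V r k.1.2 k.2.2) := by
          rw [Finset.sum_comm]
          rw [Fintype.sum_prod_type (fun k : (Fin (n ^ 2) × Fin n) × Fin (n ^ 2) × Fin n =>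
            (∑ s, H b' c' a' s * P c' s k.1.1 * Q s b' k.2.1 * V s k.1.2 k.2.2) *
              conj (∑ r, H b c a r * P c r k.1.1 * Q r b k.2.1 * V r k.1.2 k.2.2))]
          exact Finset.sum_congr rfl fun de _ => Finset.sum_congr rfl fun fg _ => mul_comm _ _
      _ = ∑ s, ∑ r, ∑ k : (Fin (n ^ 2) × Fin n) × Fin (n ^ 2) × Fin n,
            (H b' c' a' s * P c' s k.1.1 * Q s b' k.2.1 * V s k.1.2 k.2.2) *
              conj (H b c a r * P c r k.1.1 * Q r b k.2.1 * V r k.1.2 k.2.2) :=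
          expand_sum _ _
      _ = ∑ s, ∑ r, (H b' c' a' s * conj (H b c a r)) *
            ((∑ d, P c' s d * conj (P c r d)) * (∑ f, Q s b' f * conj (Q r b f)) *
              ∑ e, ∑ g, V s e g * conj (V r e g)) := by
          refine Finset.sum_congr rfl fun s _ => Finset.sum_congr rfl fun r _ => ?_
          rw [← factor3' (H b' c' a' s * conj (H b c a r))
            (fun d => P c' s d * conj (P c r d)) (fun f => Q s b' f * conj (Q r b f))
            (fun e g => V s e g * conj (V r e g))]
          refine Finset.sum_congr rfl fun k _ => ?_
          simp only [map_mul]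
          ring
      _ = ∑ s, (H b' c' a' s * conj (H b c a s)) *
            ((∑ d, P c' s d * conj (P c s d)) * (∑ f, Q s b' f * conj (Q s b f)) * (n : ℂ)) := by
          simp_rw [hVtr']
          simp only [mul_ite, mul_one, mul_zero, ite_mul, one_mul, zero_mul,
            Finset.sum_ite_eq, Finset.sum_ite_eq', Finset.mem_univ, if_true]
      _ = if ((a, b, c) : Fin (n ^ 2) × Fin (n ^ 2) × Fin (n ^ 2)) = (a', b', c') then
            (Fintype.card (Fin (n ^ 2) × Fin n) : ℂ) else 0 := by
          simp_rw [hPd2, hQd2]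
          by_cases hb : b = b'
          · by_cases hc : c = c'
            · subst hb; subst hc
              simp only [if_pos rfl, one_mul, mul_one]
              rw [← Finset.sum_mul, hHsum b c a' a]
              rcases eq_or_ne a a' with h | h
              · subst h
                simp only [if_pos rfl, Fintype.card_prod, Fintype.card_fin]
                push_cast
                ring
              · simp [h, Ne.symm h, Prod.ext_iff]
            · simp [hc, Prod.ext_iff]
          · simp [hb, Prod.ext_iff]
end
end

section
/- (The family 𝓕_m of constructions.) Let n ≥ 1 and m ≥ 1. Let (V^{r₀})_{r₀∈[n²]} be an n²-controlled family of unitary error bases of dimension n^{2m}, with elements indexed by a ∈ [n^{4m}], rows indexed by [n²]^m tuples (r₁,…,r_m), and columns indexed by e ∈ [n^{2m}], so entries are V^{r₀}_{a,(r₁,…,r_m),e}. Let Q be a quantum Latin square of dimension n², and let W be a unitary error basis on ℂ^n. For a ∈ [n^{4m}] and r₀ ∈ [n²], define the matrix U_{(a,r₀)} with rows indexed by [n²]^m × [n] and columns indexed by [n^{2m}] × [n], whose entry at row ((c₁,…,c_m), d) and column (e, f) is ∑_{r₁,…,r_m ∈ [n²]} V^{r₀}_{a,(r₁,…,r_m),e}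 · (∏_{i=1}^{m} Q_{r_{i-1}, r_i, c_i}) · W_{r_m, d, f}. Then (U_{(a,r₀)})_{(a,r₀)∈[n^{4m}]×[n²]} is a unitary error basis of dimension n^{2m+1}. -/
open scoped ComplexConjugate Matrix

noncomputable section

lemma pathA {K : Type*} [DecidableEq K] (T : K → K → K → K → ℂ)
    (hT : ∀ a b b', T a a b b' = if b = b' then 1 else 0) :
    ∀ (m : ℕ) (u u' : Fin (m + 1) → K), u 0 = u' 0 →
      ∏ i : Fin m, T (u i.castSucc) (u' i.castSucc) (u i.succ) (u' i.succ) =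
        if u ∘ Fin.succ = u' ∘ Fin.succ then 1 else 0 := by
  intro m
  induction m with
  | zero =>
    intro u u' h
    rw [if_pos (funext fun i => i.elim0)]
    simp
  | succ m ih =>
    intro u u' h
    rw [Fin.prod_univ_succ]
    have e1 : T (u (0 : Fin (m+1)).castSucc) (u' (0 : Fin (m+1)).castSucc)
        (u (0 : Fin (m+1)).succ) (u' (0 : Fin (m+1)).succ)
        = if u (0 : Fin (m+1)).succ = u' (0 : Fin (m+1)).succ then 1 else 0 := by
      rw [show ((0 : Fin (m+1)).castSucc) = 0 from rfl, h, hT]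
    rw [e1]
    by_cases h1 : u (0 : Fin (m+1)).succ = u' (0 : Fin (m+1)).succ
    · rw [if_pos h1, one_mul]
      have ih' := ih (u ∘ Fin.succ) (u' ∘ Fin.succ) h1
      have eq2 : ∀ i : Fin m,
          T (u i.succ.castSucc) (u' i.succ.castSucc) (u i.succ.succ) (u' i.succ.succ)
          = T ((u ∘ Fin.succ) i.castSucc) ((u' ∘ Fin.succ) i.castSucc)
              ((u ∘ Fin.succ) i.succ) ((u' ∘ Fin.succ) i.succ) := by
        intro i
        rfl
      rw [Finset.prod_congr rfl fun i _ => eq2 i, ih']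
      have hiff : ((u ∘ Fin.succ) ∘ Fin.succ = (u' ∘ Fin.succ) ∘ Fin.succ)
          ↔ (u ∘ Fin.succ = u' ∘ Fin.succ) := by
        constructor
        · intro hh
          funext j
          refine Fin.cases ?_ ?_ j
          · exact h1
          · intro k
            exact congrFun hh k
        · intro hh
          funext k
          exact congrFun hh k.succ
      simp only [hiff]
    · rw [if_neg h1, zero_mul, if_neg]
      intro hh
      exact h1 (congrFun hh 0)

lemma pathB {K : Type*} [DecidableEq K] (T : K → K → K → K → ℂ)
    (hT : ∀ a a' b, T a a' b b = if a = a' then 1 else 0) :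
    ∀ (m : ℕ) (u u' : Fin (m + 1) → K), u (Fin.last m) = u' (Fin.last m) →
      ∏ i : Fin m, T (u i.castSucc) (u' i.castSucc) (u i.succ) (u' i.succ) =
        if u ∘ Fin.castSucc = u' ∘ Fin.castSucc then 1 else 0 := by
  intro m
  induction m with
  | zero =>
    intro u u' h
    rw [if_pos (funext fun i => i.elim0)]
    simp
  | succ m ih =>
    intro u u' h
    rw [Fin.prod_univ_castSucc]
    have e1 : T (u (Fin.last m).castSucc) (u' (Fin.last m).castSucc)
        (u (Fin.last m).succ) (u' (Fin.last m).succ)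
        = if u (Fin.last m).castSucc = u' (Fin.last m).castSucc then 1 else 0 := by
      rw [Fin.succ_last, h, hT]
    rw [e1]
    by_cases h1 : u (Fin.last m).castSucc = u' (Fin.last m).castSucc
    · rw [if_pos h1, mul_one]
      have ih' := ih (u ∘ Fin.castSucc) (u' ∘ Fin.castSucc) h1
      have eq2 : ∀ i : Fin m,
          T (u i.castSucc.castSucc) (u' i.castSucc.castSucc) (u i.castSucc.succ) (u' i.castSucc.succ)
          = T ((u ∘ Fin.castSucc) i.castSucc) ((u' ∘ Fin.castSucc) i.castSucc)
              ((u ∘ Fin.castSucc) i.succ) ((u' ∘ Fin.castSucc) i.succ) := by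
        intro i
        rfl
      rw [Finset.prod_congr rfl fun i _ => eq2 i, ih']
      have hiff : ((u ∘ Fin.castSucc) ∘ Fin.castSucc = (u' ∘ Fin.castSucc) ∘ Fin.castSucc)
          ↔ (u ∘ Fin.castSucc = u' ∘ Fin.castSucc) := by
        constructor
        · intro hh
          funext j
          refine Fin.lastCases ?_ ?_ j
          · exact h1
          · intro k
            exact congrFun hh k
        · intro hh
          funext k
          exact congrFun hh k.castSucc
      simp only [hiff]
    · rw [if_neg h1, mul_zero, if_neg]
      intro hh
      exact h1 (congrFun hh (Fin.last m))


lemma expand (n m : ℕ)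
    (V : Fin (n ^ 2) → Fin (n ^ (4 * m)) → Matrix (Fin m → Fin (n ^ 2)) (Fin (n ^ (2 * m))) ℂ)
    (Q : Fin (n ^ 2) → Fin (n ^ 2) → Fin (n ^ 2) → ℂ)
    (W : Fin (n ^ 2) → Matrix (Fin n) (Fin n) ℂ)
    (a b : Fin (n ^ (4 * m))) (r₀ r₀' : Fin (n ^ 2))
    (e e' : Fin (n ^ (2 * m))) (f f' : Fin n) :
    ∑ cd : (Fin m → Fin (n ^ 2)) × Fin n,
      conj (∑ r : Fin m → Fin (n ^ 2),
          V r₀ a r e * (∏ i : Fin m, Q (Fin.cons (α := fun _ => Fin (n ^ 2)) r₀ r i.castSucc) (Fin.cons (α := fun _ => Fin (n ^ 2)) r₀ r i.succ) (cd.1 i)) *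
            W (Fin.cons (α := fun _ => Fin (n ^ 2)) r₀ r (Fin.last m)) cd.2 f) *
      (∑ r' : Fin m → Fin (n ^ 2),
          V r₀' b r' e' * (∏ i : Fin m, Q (Fin.cons (α := fun _ => Fin (n ^ 2)) r₀' r' i.castSucc) (Fin.cons (α := fun _ => Fin (n ^ 2)) r₀' r' i.succ) (cd.1 i)) *
            W (Fin.cons (α := fun _ => Fin (n ^ 2)) r₀' r' (Fin.last m)) cd.2 f')
    = ∑ r : Fin m → Fin (n ^ 2), ∑ r' : Fin m → Fin (n ^ 2),
        (conj (V r₀ a r e) * V r₀' b r' e') *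
          ((∏ i : Fin m, ∑ k, conj (Q (Fin.cons (α := fun _ => Fin (n ^ 2)) r₀ r i.castSucc) (Fin.cons (α := fun _ => Fin (n ^ 2)) r₀ r i.succ) k) *
              Q (Fin.cons (α := fun _ => Fin (n ^ 2)) r₀' r' i.castSucc) (Fin.cons (α := fun _ => Fin (n ^ 2)) r₀' r' i.succ) k) *
           (∑ d : Fin n, conj (W (Fin.cons (α := fun _ => Fin (n ^ 2)) r₀ r (Fin.last m)) d f) * W (Fin.cons (α := fun _ => Fin (n ^ 2)) r₀' r' (Fin.last m)) d f')) := by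
  calc
    ∑ cd : (Fin m → Fin (n ^ 2)) × Fin n,
      conj (∑ r : Fin m → Fin (n ^ 2),
          V r₀ a r e * (∏ i : Fin m, Q (Fin.cons (α := fun _ => Fin (n ^ 2)) r₀ r i.castSucc) (Fin.cons (α := fun _ => Fin (n ^ 2)) r₀ r i.succ) (cd.1 i)) *
            W (Fin.cons (α := fun _ => Fin (n ^ 2)) r₀ r (Fin.last m)) cd.2 f) *
      (∑ r' : Fin m → Fin (n ^ 2),
          V r₀' b r' e' * (∏ i : Fin m, Q (Fin.cons (α := fun _ => Fin (n ^ 2)) r₀' r' i.castSucc) (Fin.cons (α := fun _ => Fin (n ^ 2)) r₀' r' i.succ) (cd.1 i)) *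
            W (Fin.cons (α := fun _ => Fin (n ^ 2)) r₀' r' (Fin.last m)) cd.2 f')
      = ∑ cd : (Fin m → Fin (n ^ 2)) × Fin n, ∑ r : Fin m → Fin (n ^ 2), ∑ r' : Fin m → Fin (n ^ 2),
          conj (V r₀ a r e * (∏ i : Fin m, Q (Fin.cons (α := fun _ => Fin (n ^ 2)) r₀ r i.castSucc) (Fin.cons (α := fun _ => Fin (n ^ 2)) r₀ r i.succ) (cd.1 i)) *
            W (Fin.cons (α := fun _ => Fin (n ^ 2)) r₀ r (Fin.last m)) cd.2 f) *
          (V r₀' b r' e' * (∏ i : Fin m, Q (Fin.cons (α := fun _ => Fin (n ^ 2)) r₀' r' i.castSucc) (Fin.cons (α := fun _ => Fin (n ^ 2)) r₀' r' i.succ) (cd.1 i)) *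
            W (Fin.cons (α := fun _ => Fin (n ^ 2)) r₀' r' (Fin.last m)) cd.2 f') := by
        refine Finset.sum_congr rfl fun cd _ => ?_
        rw [map_sum, Finset.sum_mul_sum]
    _ = ∑ r : Fin m → Fin (n ^ 2), ∑ cd : (Fin m → Fin (n ^ 2)) × Fin n, ∑ r' : Fin m → Fin (n ^ 2), _ :=
        Finset.sum_comm
    _ = ∑ r : Fin m → Fin (n ^ 2), ∑ r' : Fin m → Fin (n ^ 2), ∑ cd : (Fin m → Fin (n ^ 2)) × Fin n,
          conj (V r₀ a r e * (∏ i : Fin m, Q (Fin.cons (α := fun _ => Fin (n ^ 2)) r₀ r i.castSucc) (Fin.cons (α := fun _ => Fin (n ^ 2)) r₀ r i.succ) (cd.1 i)) *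
            W (Fin.cons (α := fun _ => Fin (n ^ 2)) r₀ r (Fin.last m)) cd.2 f) *
          (V r₀' b r' e' * (∏ i : Fin m, Q (Fin.cons (α := fun _ => Fin (n ^ 2)) r₀' r' i.castSucc) (Fin.cons (α := fun _ => Fin (n ^ 2)) r₀' r' i.succ) (cd.1 i)) *
            W (Fin.cons (α := fun _ => Fin (n ^ 2)) r₀' r' (Fin.last m)) cd.2 f') :=
        Finset.sum_congr rfl fun r _ => Finset.sum_comm
    _ = _ := by
        refine Finset.sum_congr rfl fun r _ => Finset.sum_congr rfl fun r' _ => ?_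
        have hps : (∏ i : Fin m, ∑ k, conj (Q (Fin.cons (α := fun _ => Fin (n ^ 2)) r₀ r i.castSucc) (Fin.cons (α := fun _ => Fin (n ^ 2)) r₀ r i.succ) k) *
              Q (Fin.cons (α := fun _ => Fin (n ^ 2)) r₀' r' i.castSucc) (Fin.cons (α := fun _ => Fin (n ^ 2)) r₀' r' i.succ) k)
            = ∑ c : Fin m → Fin (n ^ 2), ∏ i : Fin m,
                conj (Q (Fin.cons (α := fun _ => Fin (n ^ 2)) r₀ r i.castSucc) (Fin.cons (α := fun _ => Fin (n ^ 2)) r₀ r i.succ) (c i)) *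
                  Q (Fin.cons (α := fun _ => Fin (n ^ 2)) r₀' r' i.castSucc) (Fin.cons (α := fun _ => Fin (n ^ 2)) r₀' r' i.succ) (c i) := by
          rw [Finset.prod_univ_sum]
          rw [Fintype.piFinset_univ]
        rw [Fintype.sum_prod_type, hps, Finset.sum_mul_sum, Finset.mul_sum]
        refine Finset.sum_congr rfl fun c _ => ?_
        rw [Finset.mul_sum]
        refine Finset.sum_congr rfl fun d _ => ?_
        dsimp only
        rw [map_mul, map_mul, map_prod, Finset.prod_mul_distrib]
        ring

lemma swap4 {α β γ δ : Type*} [Fintype α] [Fintype β] [Fintype γ] [Fintype δ]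
    (g : α → β → γ → δ → ℂ) :
    ∑ e : α, ∑ f : β, ∑ r : γ, ∑ r' : δ, g e f r r' = ∑ r : γ, ∑ r' : δ, ∑ e : α, ∑ f : β, g e f r r' := by
  calc ∑ e : α, ∑ f : β, ∑ r : γ, ∑ r' : δ, g e f r r'
      = ∑ e : α, ∑ r : γ, ∑ f : β, ∑ r' : δ, g e f r r' :=
        Finset.sum_congr rfl fun e _ => Finset.sum_comm
    _ = ∑ r : γ, ∑ e : α, ∑ f : β, ∑ r' : δ, g e f r r' := Finset.sum_comm
    _ = ∑ r : γ, ∑ e : α, ∑ r' : δ, ∑ f : β, g e f r r' :=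
        Finset.sum_congr rfl fun r _ => Finset.sum_congr rfl fun e _ => Finset.sum_comm
    _ = ∑ r : γ, ∑ r' : δ, ∑ e : α, ∑ f : β, g e f r r' :=
        Finset.sum_congr rfl fun r _ => Finset.sum_comm

set_option maxRecDepth 8000 in
/-- the family 𝓕_m: an n²-controlled family of n^{2m}-dimensional UEBs
(elements indexed by [n^{4m}], rows by m-tuples over [n²], columns by [n^{2m}]), an
n²-dimensional quantum Latin square, and a UEB on ℂ^n produce an n^{2m+1}-dimensional
UEB whose entry at row ((c₁,…,c_m),d) and column (e,f) is
`∑_{r₁,…,r_m} V^{r₀}_{a,(r₁,…,r_m),e} · (∏ᵢ Q_{r_{i-1},r_i,c_i}) · W_{r_m,d,f}`,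
where r₀ is the controlling index (formalized via `Fin.cons r₀ r`). -/
theorem family_Fm_ueb (n m : ℕ) (hn : 1 ≤ n) (hm : 1 ≤ m)
    (V : Fin (n ^ 2) → Fin (n ^ (4 * m)) →
      Matrix (Fin m → Fin (n ^ 2)) (Fin (n ^ (2 * m))) ℂ)
    (Q : Fin (n ^ 2) → Fin (n ^ 2) → Fin (n ^ 2) → ℂ)
    (W : Fin (n ^ 2) → Matrix (Fin n) (Fin n) ℂ)
    (hV : ∀ r₀, IsUEB (V r₀))
    (hQ : IsQLS Q)
    (hW : IsUEB W) :
    IsUEB (fun ar : Fin (n ^ (4 * m)) × Fin (n ^ 2) =>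
      Matrix.of fun (cd : (Fin m → Fin (n ^ 2)) × Fin n)
          (ef : Fin (n ^ (2 * m)) × Fin n) =>
        ∑ r : Fin m → Fin (n ^ 2),
          (fun s : Fin (m + 1) → Fin (n ^ 2) =>
            V ar.2 ar.1 r ef.1 *
              (∏ i : Fin m, Q (s i.castSucc) (s i.succ) (cd.1 i)) *
              W (s (Fin.last m)) cd.2 ef.2)
          (Fin.cons ar.2 r)) := by
  have hQrow := hQ.2.1
  have hQcol := hQ.2.2
  have hWc : ∀ k f f', (∑ d : Fin n, conj (W k d f) * W k d f') = if f = f' then (1:ℂ) else 0 := by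
    intro k f f'
    have h : ((W k)ᴴ * W k) f f' = (1 : Matrix (Fin n) (Fin n) ℂ) f f' := by rw [(hW.2.1 k).2]
    simp only [Matrix.mul_apply, Matrix.conjTranspose_apply, Matrix.one_apply, starRingEnd_apply] at h
    exact h
  have hWt : ∀ k k', (∑ f : Fin n, ∑ d : Fin n, conj (W k d f) * W k' d f) = if k = k' then (n:ℂ) else 0 := by
    intro k k'
    have h := hW.2.2 k k'
    simp only [Matrix.trace, Matrix.diag_apply, Matrix.mul_apply, Matrix.conjTranspose_apply,
      starRingEnd_apply, Fintype.card_fin] at h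
    exact h
  have hVc : ∀ r₀ a e e', (∑ r : Fin m → Fin (n ^ 2), conj (V r₀ a r e) * V r₀ a r e')
      = if e = e' then (1:ℂ) else 0 := by
    intro r₀ a e e'
    have h : ((V r₀ a)ᴴ * V r₀ a) e e' = (1 : Matrix (Fin (n ^ (2 * m))) (Fin (n ^ (2 * m))) ℂ) e e' := by
      rw [((hV r₀).2.1 a).2]
    simp only [Matrix.mul_apply, Matrix.conjTranspose_apply, Matrix.one_apply, starRingEnd_apply] at h
    exact h
  have hVt : ∀ r₀ a b, (∑ e : Fin (n ^ (2 * m)), ∑ r : Fin m → Fin (n ^ 2),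
      conj (V r₀ a r e) * V r₀ b r e) = if a = b then (((n ^ 2) ^ m : ℕ) : ℂ) else 0 := by
    intro r₀ a b
    have h := (hV r₀).2.2 a b
    simp only [Matrix.trace, Matrix.diag_apply, Matrix.mul_apply, Matrix.conjTranspose_apply,
      starRingEnd_apply, Fintype.card_fun, Fintype.card_fin] at h
    exact h
  have hpathA : ∀ (r₀ : Fin (n ^ 2)) (r r' : Fin m → Fin (n ^ 2)),
      (∏ i : Fin m, ∑ k, conj (Q (Fin.cons (α := fun _ => Fin (n ^ 2)) r₀ r i.castSucc) (Fin.cons (α := fun _ => Fin (n ^ 2)) r₀ r i.succ) k) *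
          Q (Fin.cons (α := fun _ => Fin (n ^ 2)) r₀ r' i.castSucc) (Fin.cons (α := fun _ => Fin (n ^ 2)) r₀ r' i.succ) k)
      = if r = r' then (1:ℂ) else 0 := by
    intro r₀ r r'
    have h := pathA (fun x x' y y' => ∑ k, conj (Q x y k) * Q x' y' k)
      (fun a b b' => hQrow a b b') m (Fin.cons r₀ r) (Fin.cons r₀ r') rfl
    rw [show (Fin.cons (α := fun _ => Fin (n ^ 2)) r₀ r) ∘ Fin.succ = r from funext fun i => Fin.cons_succ _ _ _,
        show (Fin.cons (α := fun _ => Fin (n ^ 2)) r₀ r') ∘ Fin.succ = r' from funext fun i => Fin.cons_succ _ _ _] at h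
    exact h
  refine ⟨?_, ?_, ?_⟩
  · simp only [Fintype.card_prod, Fintype.card_fun, Fintype.card_fin]
    rw [mul_pow, ← pow_mul, ← pow_mul, show 2 * (m * 2) = 4 * m by ring]
  · rintro ⟨a, r₀⟩
    have h2 : (Matrix.of fun (cd : (Fin m → Fin (n ^ 2)) × Fin n)
          (ef : Fin (n ^ (2 * m)) × Fin n) =>
        ∑ r : Fin m → Fin (n ^ 2),
          V r₀ a r ef.1 *
              (∏ i : Fin m, Q (Fin.cons (α := fun _ => Fin (n ^ 2)) r₀ r i.castSucc) (Fin.cons (α := fun _ => Fin (n ^ 2)) r₀ r i.succ) (cd.1 i)) *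
              W (Fin.cons (α := fun _ => Fin (n ^ 2)) r₀ r (Fin.last m)) cd.2 ef.2)ᴴ *
        (Matrix.of fun (cd : (Fin m → Fin (n ^ 2)) × Fin n)
          (ef : Fin (n ^ (2 * m)) × Fin n) =>
        ∑ r : Fin m → Fin (n ^ 2),
          V r₀ a r ef.1 *
              (∏ i : Fin m, Q (Fin.cons (α := fun _ => Fin (n ^ 2)) r₀ r i.castSucc) (Fin.cons (α := fun _ => Fin (n ^ 2)) r₀ r i.succ) (cd.1 i)) *
              W (Fin.cons (α := fun _ => Fin (n ^ 2)) r₀ r (Fin.last m)) cd.2 ef.2) = 1 := by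
      ext ⟨e, f⟩ ⟨e', f'⟩
      simp only [Matrix.mul_apply, Matrix.conjTranspose_apply, Matrix.of_apply, Matrix.one_apply]
      simp only [← starRingEnd_apply]
      rw [expand n m V Q W a a r₀ r₀ e e' f f']
      simp only [hpathA r₀, ite_mul, one_mul, zero_mul, mul_ite, mul_zero,
        Finset.sum_ite_eq, Finset.mem_univ, if_true]
      simp only [hWc]
      rw [← Finset.sum_mul, hVc r₀ a e e']
      by_cases he : e = e' <;> by_cases hf : f = f' <;> simp [he, hf, Prod.ext_iff]
    constructor
    · have hcard : Fintype.card ((Fin m → Fin (n ^ 2)) × Fin n)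
          = Fintype.card (Fin (n ^ (2 * m)) × Fin n) := by
        simp only [Fintype.card_prod, Fintype.card_fun, Fintype.card_fin, ← pow_mul]
      exact (Matrix.mul_eq_one_comm_of_equiv (Fintype.equivOfCardEq hcard)).mpr h2
    · exact h2
  · rintro ⟨a, r₀⟩ ⟨b, r₀'⟩
    have hPB : ∀ r r' : Fin m → Fin (n ^ 2),
        (∏ i : Fin m, ∑ k, conj (Q (Fin.cons (α := fun _ => Fin (n ^ 2)) r₀ r i.castSucc) (Fin.cons (α := fun _ => Fin (n ^ 2)) r₀ r i.succ) k) *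
            Q (Fin.cons (α := fun _ => Fin (n ^ 2)) r₀' r' i.castSucc) (Fin.cons (α := fun _ => Fin (n ^ 2)) r₀' r' i.succ) k) *
          (if Fin.cons (α := fun _ => Fin (n ^ 2)) r₀ r (Fin.last m) = Fin.cons (α := fun _ => Fin (n ^ 2)) r₀' r' (Fin.last m) then (n:ℂ) else 0)
        = if Fin.cons (α := fun _ => Fin (n ^ 2)) r₀ r = Fin.cons (α := fun _ => Fin (n ^ 2)) r₀' r' then (n:ℂ) else 0 := by
      intro r r'
      by_cases hl : Fin.cons (α := fun _ => Fin (n ^ 2)) r₀ r (Fin.last m) = Fin.cons (α := fun _ => Fin (n ^ 2)) r₀' r' (Fin.last m)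
      · rw [pathB (fun x x' y y' => ∑ k, conj (Q x y k) * Q x' y' k)
            (fun a a' b => hQcol a a' b) m _ _ hl, if_pos hl]
        by_cases h2 : (Fin.cons (α := fun _ => Fin (n ^ 2)) r₀ r) ∘ Fin.castSucc = (Fin.cons (α := fun _ => Fin (n ^ 2)) r₀' r') ∘ Fin.castSucc
        · have hcc : Fin.cons (α := fun _ => Fin (n ^ 2)) r₀ r = Fin.cons (α := fun _ => Fin (n ^ 2)) r₀' r' := by
            funext j
            refine Fin.lastCases hl (fun k => congrFun h2 k) j
          rw [if_pos h2, one_mul, if_pos hcc]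
        · rw [if_neg h2, zero_mul, if_neg]
          intro hh
          exact h2 (by rw [hh])
      · rw [if_neg hl, mul_zero, if_neg]
        intro hh
        exact hl (by rw [hh])
    simp only [Matrix.trace, Matrix.diag_apply, Matrix.mul_apply, Matrix.conjTranspose_apply,
      Matrix.of_apply]
    simp only [← starRingEnd_apply]
    rw [Fintype.sum_prod_type]
    refine Eq.trans (Finset.sum_congr rfl fun e _ => Finset.sum_congr rfl fun f _ =>
      expand n m V Q W a b r₀ r₀' e e f f) ?_
    have reorder : (∑ e : Fin (n ^ (2 * m)), ∑ f : Fin n, ∑ r : Fin m → Fin (n ^ 2), ∑ r' : Fin m → Fin (n ^ 2),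
        (conj (V r₀ a r e) * V r₀' b r' e) *
          ((∏ i : Fin m, ∑ k, conj (Q (Fin.cons (α := fun _ => Fin (n ^ 2)) r₀ r i.castSucc) (Fin.cons (α := fun _ => Fin (n ^ 2)) r₀ r i.succ) k) *
              Q (Fin.cons (α := fun _ => Fin (n ^ 2)) r₀' r' i.castSucc) (Fin.cons (α := fun _ => Fin (n ^ 2)) r₀' r' i.succ) k) *
           (∑ d : Fin n, conj (W (Fin.cons (α := fun _ => Fin (n ^ 2)) r₀ r (Fin.last m)) d f) * W (Fin.cons (α := fun _ => Fin (n ^ 2)) r₀' r' (Fin.last m)) d f)))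
        = ∑ r : Fin m → Fin (n ^ 2), ∑ r' : Fin m → Fin (n ^ 2), ∑ e : Fin (n ^ (2 * m)), ∑ f : Fin n,
        (conj (V r₀ a r e) * V r₀' b r' e) *
          ((∏ i : Fin m, ∑ k, conj (Q (Fin.cons (α := fun _ => Fin (n ^ 2)) r₀ r i.castSucc) (Fin.cons (α := fun _ => Fin (n ^ 2)) r₀ r i.succ) k) *
              Q (Fin.cons (α := fun _ => Fin (n ^ 2)) r₀' r' i.castSucc) (Fin.cons (α := fun _ => Fin (n ^ 2)) r₀' r' i.succ) k) *
           (∑ d : Fin n, conj (W (Fin.cons (α := fun _ => Fin (n ^ 2)) r₀ r (Fin.last m)) d f) * W (Fin.cons (α := fun _ => Fin (n ^ 2)) r₀' r' (Fin.last m)) d f)) :=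
      swap4 _
    rw [reorder]
    simp only [← Finset.mul_sum]
    simp only [← Finset.sum_mul]
    simp only [hWt, hPB, Fin.cons_inj]
    by_cases hr : r₀ = r₀'
    · subst hr
      simp only [eq_self_iff_true, true_and, mul_ite, mul_zero,
        Finset.sum_ite_eq, Finset.mem_univ, if_true]
      rw [← Finset.sum_mul, Finset.sum_comm, hVt r₀ a b]
      by_cases hab : a = b <;>
        simp [hab, Fintype.card_prod, Fintype.card_fun, Fintype.card_fin, Prod.ext_iff] <;>
        push_cast <;> ring
    · have hne : ¬ ((a, r₀) = (b, r₀')) := by simp [Prod.ext_iff, hr]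
      simp [hr, hne]
end
end

section
/- Let m ≥ 1 and let (V_i)_{i∈I} be a unitary error basis on ℂ^m with I of cardinality m², such that the identity matrix belongs to (V_i) and (V_i) is equivalent to a quantum shift-and-multiply basis. Then there exists a subset S ⊆ I of cardinality m such that V_i · V_j = V_j · V_i for all i, j ∈ S (the UEB contains m pairwise commuting matrices). -/
open scoped ComplexConjugate Matrix

noncomputable section

lemma aux_diag_mul_comm {n : Type*} [Fintype n] {E F : Matrix n n ℂ}
    (hE : E.IsDiag) (hF : F.IsDiag) : E * F = F * E := by
  ext i j
  simp only [Matrix.mul_apply]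
  refine Finset.sum_congr rfl fun k _ => ?_
  by_cases hik : i = k
  · subst hik
    by_cases hij : i = j
    · subst hij; ring
    · rw [hF hij, hE hij, mul_zero, mul_zero]
  · rw [hE hik, hF hik, zero_mul, zero_mul]

lemma aux_diag_mul {n : Type*} [Fintype n] {E F : Matrix n n ℂ}
    (hE : E.IsDiag) (hF : F.IsDiag) : (E * F).IsDiag := by
  intro i j hij
  simp only [Matrix.mul_apply]
  refine Finset.sum_eq_zero fun k _ => ?_
  by_cases hik : i = k
  · subst hik; rw [hF hij, mul_zero]
  · rw [hE hik, zero_mul]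

/-- a UEB on ℂ^m containing the identity matrix and equivalent to a
quantum shift-and-multiply basis contains m pairwise commuting matrices. -/
theorem qsm_has_commuting_subset (m : ℕ) (hm : 1 ≤ m)
    {I : Type} [Fintype I] [DecidableEq I]
    (V : I → Matrix (Fin m) (Fin m) ℂ)
    (hV : IsUEB V)
    (hid : ∃ i, V i = 1)
    (hequiv : ∃ (Qm : Fin m → Matrix (Fin m) (Fin m) ℂ)
        (D : Fin m → Fin m → Matrix (Fin m) (Fin m) ℂ),
        (∀ a, Qm a ∈ Matrix.unitaryGroup (Fin m) ℂ) ∧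
        (∀ a b, D a b ∈ Matrix.unitaryGroup (Fin m) ℂ) ∧
        (∀ a b, (D a b).IsDiag) ∧
        IsUEB (fun ab : Fin m × Fin m => Qm ab.1 * D ab.1 ab.2) ∧
        ∃ (A B : Matrix (Fin m) (Fin m) ℂ),
          A ∈ Matrix.unitaryGroup (Fin m) ℂ ∧ B ∈ Matrix.unitaryGroup (Fin m) ℂ ∧
          ∃ (c : I → ℂ), (∀ i, ‖c i‖ = 1) ∧
          ∃ (σ : I ≃ Fin m × Fin m),
            ∀ i, V i = c i • (A * (Qm (σ i).1 * D (σ i).1 (σ i).2) * B)) :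
    ∃ S : Finset I, S.card = m ∧ ∀ i ∈ S, ∀ j ∈ S, V i * V j = V j * V i := by
  obtain ⟨Qm, D, hQ, hD, hDiag, _, A, B, hA, hB, c, hc, σ, hVeq⟩ := hequiv
  obtain ⟨i₀, hi₀⟩ := hid
  set a₀ := (σ i₀).1 with ha₀
  set b₀ := (σ i₀).2 with hb₀
  have hc0 : c i₀ ≠ 0 := by
    intro h
    have := hc i₀
    rw [h] at this
    simp at this
  have hBB : B * Bᴴ = 1 := by
    have := (Matrix.mem_unitaryGroup_iff).mp hB
    rwa [Matrix.star_eq_conjTranspose] at this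
  have hBB' : Bᴴ * B = 1 := by
    have := (Matrix.mem_unitaryGroup_iff').mp hB
    rwa [Matrix.star_eq_conjTranspose] at this
  have hDD : ∀ a b, D a b * (D a b)ᴴ = 1 := fun a b => by
    have := (Matrix.mem_unitaryGroup_iff).mp (hD a b)
    rwa [Matrix.star_eq_conjTranspose] at this
  -- key identity: A * Qm a₀ = (c i₀)⁻¹ • (Bᴴ * (D a₀ b₀)ᴴ)
  have h1 : c i₀ • (A * (Qm a₀ * D a₀ b₀) * B) = 1 := by
    rw [← hVeq i₀]; exact hi₀
  have hAQ : A * Qm a₀ = (c i₀)⁻¹ • (Bᴴ * (D a₀ b₀)ᴴ) := by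
    have h2 : (c i₀ • (A * (Qm a₀ * D a₀ b₀) * B)) * (Bᴴ * (D a₀ b₀)ᴴ)
        = 1 * (Bᴴ * (D a₀ b₀)ᴴ) := by rw [h1]
    rw [one_mul, smul_mul_assoc] at h2
    have h3 : A * (Qm a₀ * D a₀ b₀) * B * (Bᴴ * (D a₀ b₀)ᴴ) = A * Qm a₀ := by
      calc A * (Qm a₀ * D a₀ b₀) * B * (Bᴴ * (D a₀ b₀)ᴴ)
          = A * Qm a₀ * (D a₀ b₀ * ((B * Bᴴ) * (D a₀ b₀)ᴴ)) := by
            simp only [Matrix.mul_assoc]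
        _ = A * Qm a₀ := by rw [hBB, one_mul, hDD, Matrix.mul_one]
    rw [h3] at h2
    rw [← h2, smul_smul, inv_mul_cancel₀ hc0, one_smul]
  -- the commuting subset
  refine ⟨Finset.image (fun b : Fin m => σ.symm (a₀, b)) Finset.univ, ?_, ?_⟩
  · rw [Finset.card_image_of_injective]
    · simp
    · intro x y h
      have := σ.symm.injective h
      exact (Prod.mk.injEq _ _ _ _).mp this |>.2
  · have key : ∀ i, (σ i).1 = a₀ →
        V i = (c i * (c i₀)⁻¹) • (Bᴴ * ((D a₀ b₀)ᴴ * D a₀ (σ i).2) * B) := by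
      intro i hi
      rw [hVeq i, hi]
      rw [show A * (Qm a₀ * D a₀ (σ i).2) * B
          = (A * Qm a₀) * (D a₀ (σ i).2 * B) by simp only [Matrix.mul_assoc]]
      rw [hAQ, smul_mul_assoc, smul_smul]
      congr 1
      simp only [Matrix.mul_assoc]
    intro i hi j hj
    simp only [Finset.mem_image, Finset.mem_univ, true_and] at hi hj
    obtain ⟨bi, hbi⟩ := hi
    obtain ⟨bj, hbj⟩ := hj
    have hib : (σ i).1 = a₀ := by rw [← hbi, Equiv.apply_symm_apply]
    have hjb : (σ j).1 = a₀ := by rw [← hbj, Equiv.apply_symm_apply]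
    rw [key i hib, key j hjb]
    set Ei := (D a₀ b₀)ᴴ * D a₀ (σ i).2 with hEi
    set Ej := (D a₀ b₀)ᴴ * D a₀ (σ j).2 with hEj
    have hdi : Ei.IsDiag := aux_diag_mul ((hDiag a₀ b₀).conjTranspose) (hDiag a₀ _)
    have hdj : Ej.IsDiag := aux_diag_mul ((hDiag a₀ b₀).conjTranspose) (hDiag a₀ _)
    have hmid : ∀ E F : Matrix (Fin m) (Fin m) ℂ,
        (Bᴴ * E * B) * (Bᴴ * F * B) = Bᴴ * (E * F) * B := by
      intro E F
      calc (Bᴴ * E * B) * (Bᴴ * F * B)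
          = Bᴴ * (E * ((B * Bᴴ) * (F * B))) := by simp only [Matrix.mul_assoc]
        _ = Bᴴ * (E * F) * B := by rw [hBB, one_mul]; simp only [Matrix.mul_assoc]
    rw [smul_mul_smul_comm, smul_mul_smul_comm, hmid, hmid,
      aux_diag_mul_comm hdi hdj, mul_comm (c i * (c i₀)⁻¹)]
end
end

section
/- Let (V_i)_{i∈I} be a unitary error basis on ℂ^n containing the identity matrix, such that (V_i) is equivalent to a nice error basis. Then, up to multiplication by a phase, (V_i) is closed under taking adjoints: for every i ∈ I there exist j ∈ I and a complex scalar c with |c| = 1 such that V_i† = c · V_j. -/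
open scoped ComplexConjugate Matrix

noncomputable section

/-- a UEB on ℂ^n containing the identity matrix and equivalent to a nice
error basis is, up to phases, closed under taking adjoints. -/
theorem nice_closed_under_adjoints (n : ℕ) (hn : 1 ≤ n)
    {I : Type} [Fintype I] [DecidableEq I]
    (V : I → Matrix (Fin n) (Fin n) ℂ)
    (hV : IsUEB V)
    (hid : ∃ i, V i = 1)
    (hnice : ∃ (A : Type) (_ : Fintype A) (_ : DecidableEq A)
        (U : A → Matrix (Fin n) (Fin n) ℂ),
        IsUEB U ∧ (∃ a, U a = 1) ∧
        (∀ a b, ∃ (ω : ℂ) (c : A), ‖ω‖ = 1 ∧ U a * U b = ω • U c) ∧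
        ∃ (P R : Matrix (Fin n) (Fin n) ℂ),
          P ∈ Matrix.unitaryGroup (Fin n) ℂ ∧ R ∈ Matrix.unitaryGroup (Fin n) ℂ ∧
          ∃ (c : I → ℂ), (∀ i, ‖c i‖ = 1) ∧
          ∃ (σ : I ≃ A), ∀ i, V i = c i • (P * U (σ i) * R)) :
    ∀ i, ∃ (j : I) (c : ℂ), ‖c‖ = 1 ∧ (V i)ᴴ = c • V j := by
  intro i
  obtain ⟨A, _, _, U, hU, ⟨e, hUe⟩, hmul, P, R, hP, hR, c, hc, σ, hVeq⟩ := hnice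
  obtain ⟨i₀, hi₀⟩ := hid
  obtain ⟨_, hunit, htr⟩ := hU
  have hn0 : (n : ℂ) ≠ 0 := by
    simp only [ne_eq, Nat.cast_eq_zero]; omega
  have habs_ne : ∀ z : ℂ, ‖z‖ = 1 → z ≠ 0 := by
    intro z hz h; rw [h] at hz; simp at hz
  have hcardFin : Fintype.card (Fin n) = n := Fintype.card_fin n
  -- uniqueness up to nonzero scalar
  have huniq : ∀ (b b' : A) (z : ℂ), z ≠ 0 → U b = z • U b' → b = b' := by
    intro b b' z hz h
    by_contra hne
    have h1 := htr b' b
    rw [if_neg (Ne.symm hne), h, Matrix.mul_smul, Matrix.trace_smul] at h1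
    rw [htr b' b', if_pos rfl, hcardFin] at h1
    rw [smul_eq_mul, mul_eq_zero] at h1
    tauto
  -- the nice basis is closed under adjoints up to phase
  have hinv : ∀ a : A, ∃ ω : ℂ, ‖ω‖ = 1 ∧ ∃ b, (U a)ᴴ = ω • U b := by
    intro a
    have hch : ∀ b, ∃ ω cc, ‖ω‖ = 1 ∧ U a * U b = ω • U cc := hmul a
    choose ω f hω hf using hch
    have hfinj : Function.Injective f := by
      intro b b' hbb
      have h1 := hf b
      have h2 := hf b'
      rw [hbb] at h1
      have hb' : U (f b') = (ω b')⁻¹ • (U a * U b') := by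
        rw [h2, smul_smul, inv_mul_cancel₀ (habs_ne _ (hω b')), one_smul]
      rw [hb', smul_smul] at h1
      have h3 : U b = (ω b * (ω b')⁻¹) • U b' := by
        have h4 := congrArg (fun M => (U a)ᴴ * M) h1
        simpa [← Matrix.mul_assoc, (hunit a).2, Matrix.mul_smul] using h4
      exact huniq b b' _ (mul_ne_zero (habs_ne _ (hω b))
        (inv_ne_zero (habs_ne _ (hω b')))) h3
    obtain ⟨b, hb⟩ := (Finite.injective_iff_surjective.mp hfinj) e
    have h1 := hf b
    rw [hb, hUe] at h1
    refine ⟨(ω b)⁻¹, by rw [norm_inv, hω b, inv_one], b, ?_⟩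
    have h4 := congrArg (fun M => (U a)ᴴ * M) h1
    simp only [← Matrix.mul_assoc, (hunit a).2, Matrix.one_mul, Matrix.mul_one,
      Matrix.mul_smul] at h4
    rw [h4, smul_smul, inv_mul_cancel₀ (habs_ne _ (hω b)), one_smul]
  -- notation
  set a₀ := σ i₀ with ha₀def
  set a := σ i with hadef
  have hci₀ := habs_ne _ (hc i₀)
  have hP2 : Pᴴ * P = 1 := by
    have := (Matrix.mem_unitaryGroup_iff'.mp hP)
    exact this
  -- express R
  have h0 : c i₀ • (P * U a₀ * R) = 1 := by
    rw [← hVeq i₀, hi₀]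
  have hR_eq : R = (c i₀)⁻¹ • ((U a₀)ᴴ * Pᴴ) := by
    calc R = (c i₀)⁻¹ • ((U a₀)ᴴ * (Pᴴ * (c i₀ • (P * U a₀ * R)))) := by
            rw [Matrix.mul_smul, Matrix.mul_smul, smul_smul,
              inv_mul_cancel₀ hci₀, one_smul]
            rw [show P * U a₀ * R = P * (U a₀ * R) by rw [Matrix.mul_assoc]]
            rw [← Matrix.mul_assoc Pᴴ P, hP2, Matrix.one_mul,
              ← Matrix.mul_assoc, (hunit a₀).2, Matrix.one_mul]
      _ = (c i₀)⁻¹ • ((U a₀)ᴴ * Pᴴ) := by rw [h0, Matrix.mul_one]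
  -- the key matrix identity
  obtain ⟨ω₁, hω₁, b, hb⟩ := hinv a
  obtain ⟨ω₂, d₂, hω₂, hd₂⟩ := hmul a₀ b
  obtain ⟨ω₃, w, hω₃, hw⟩ := hmul d₂ a₀
  have hkey : U a₀ * (U a)ᴴ = (ω₁ * ω₂ * ω₃) • (U w * (U a₀)ᴴ) := by
    have h1 : U a₀ * (U a)ᴴ = (ω₁ * ω₂) • U d₂ := by
      rw [hb, Matrix.mul_smul, hd₂, smul_smul, mul_comm ω₁ ω₂]
    have h2 : U d₂ = ω₃ • (U w * (U a₀)ᴴ) := by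
      have h3 := congrArg (fun M => M * (U a₀)ᴴ) hw
      simpa [Matrix.mul_assoc, (hunit a₀).1, Matrix.smul_mul] using h3
    rw [h1, h2, smul_smul, mul_assoc]
  set t : ℂ := ω₁ * ω₂ * ω₃ with htdef
  have htabs : ‖t‖ = 1 := by
    rw [htdef, norm_mul, norm_mul, hω₁, hω₂, hω₃]; ring
  set M : Matrix (Fin n) (Fin n) ℂ := P * (U w * ((U a₀)ᴴ * Pᴴ)) with hMdef
  -- compute (V i)ᴴ
  have hVi : (V i)ᴴ = ((starRingEnd ℂ) (c i * (c i₀)⁻¹) * t) • M := by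
    have hVi1 : V i = (c i * (c i₀)⁻¹) • (P * U a * ((U a₀)ᴴ * Pᴴ)) := by
      rw [hVeq i, hR_eq, Matrix.mul_smul, smul_smul]
    have hT : (P * U a * ((U a₀)ᴴ * Pᴴ))ᴴ = t • M := by
      have h5 : (P * U a * ((U a₀)ᴴ * Pᴴ))ᴴ = P * (U a₀ * ((U a)ᴴ * Pᴴ)) := by
        simp [Matrix.conjTranspose_mul, Matrix.mul_assoc]
      rw [h5, hMdef, ← Matrix.mul_assoc (U a₀), hkey, Matrix.smul_mul,
        Matrix.mul_smul, Matrix.mul_assoc]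
    rw [hVi1, Matrix.conjTranspose_smul, hT, smul_smul, starRingEnd_apply]
  -- compute V (σ.symm w)
  set j : I := σ.symm w with hjdef
  have hVj : V j = (c j * (c i₀)⁻¹) • M := by
    rw [hVeq j, hR_eq, Matrix.mul_smul, smul_smul, hMdef,
      show σ j = w from Equiv.apply_symm_apply σ w, Matrix.mul_assoc]
  have hcj := habs_ne _ (hc j)
  refine ⟨j, (starRingEnd ℂ) (c i * (c i₀)⁻¹) * t * (c j * (c i₀)⁻¹)⁻¹, ?_, ?_⟩
  · simp only [map_mul, map_inv₀, norm_mul, norm_inv, Complex.norm_conj, hc, htabs]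
    norm_num
  · rw [hVi, hVj, smul_smul, mul_assoc,
      inv_mul_cancel₀ (mul_ne_zero hcj (inv_ne_zero hci₀)), mul_one]
end
end

section
/- (Dita's construction.) Let n, m ≥ 1, let J be a Hadamard matrix of dimension n, and let (K^c)_{c∈[n]} be an n-controlled family of Hadamard matrices of dimension m. Then the matrix H indexed by [n]×[m] on both rows and columns, with entries H_{(a,b),(c,d)} = J_{a,c} · K^c_{b,d} for a, c ∈ [n] and b, d ∈ [m], is a Hadamard matrix of dimension nm. -/
open scoped ComplexConjugate Matrix

noncomputable section

/-- Dita's construction: an n-dimensional Hadamard matrix J and an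
n-controlled family of m-dimensional Hadamard matrices combine, via
`H_{(a,b),(c,d)} = J_{a,c} · K^c_{b,d}`, into an nm-dimensional Hadamard matrix. -/
theorem dita_construction (n m : ℕ) (hn : 1 ≤ n) (hm : 1 ≤ m)
    (J : Matrix (Fin n) (Fin n) ℂ)
    (K : Fin n → Matrix (Fin m) (Fin m) ℂ)
    (hJ : IsHadamard J) (hK : ∀ c, IsHadamard (K c)) :
    IsHadamard (Matrix.of fun (p q : Fin n × Fin m) =>
      J p.1 q.1 * K q.1 p.2 q.2) := by
  obtain ⟨hJc, hJ1, hJo⟩ := hJ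
  refine ⟨by simp, ?_, ?_⟩
  · intro i j
    simp only [Matrix.of_apply, map_mul, norm_mul]
    rw [hJ1, (hK j.1).2.1]
    norm_num
  · rintro ⟨a, b⟩ ⟨a', b'⟩
    have : ∑ k : Fin n × Fin m,
        (J a k.1 * K k.1 b k.2) * conj (J a' k.1 * K k.1 b' k.2)
        = ∑ c : Fin n, (J a c * conj (J a' c)) *
            ∑ d : Fin m, K c b d * conj (K c b' d) := by
      rw [Fintype.sum_prod_type]
      apply Finset.sum_congr rfl
      intro c _
      rw [Finset.mul_sum]
      apply Finset.sum_congr rfl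
      intro d _
      simp only [map_mul]
      ring
    simp only [Matrix.of_apply]
    rw [this]
    have hKo : ∀ c : Fin n, ∑ d : Fin m, K c b d * conj (K c b' d)
        = if b = b' then (m : ℂ) else 0 := by
      intro c
      have := (hK c).2.2 b b'
      simpa using this
    simp only [hKo, Finset.sum_ite_eq]
    by_cases hb : b = b'
    · simp only [hb, if_pos rfl]
      rw [← Finset.sum_mul]
      have := hJo a a'
      simp only [Fintype.card_fin] at this
      rw [this]
      subst hb
      by_cases ha : a = a'
      · subst ha
        simp only [if_pos rfl, Prod.mk.injEq, true_and, Fintype.card_prod,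
          Fintype.card_fin]
        norm_num
      · simp [ha, Prod.ext_iff]
    · simp [hb, Prod.ext_iff]
end
end
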